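/- arXiv:1605.03949 — 7 statements merged into one kernel-verified Lean document; each statement's English description precedes it below -/
import Mathlib

section
/- Let X be any set and S : X × X → [0,1] a similarity (a symmetric function with S(A,A) = 1 for all A). If S admits an LSH scheme, i.e., there is a probability distribution over hash functions h : X → ℕ such that Pr_h[h(A) = h(B)] = S(A,B) for all A, B ∈ X, then the distance d(A,B) = 1 − S(A,B) satisfies the triangle inequality: d(A,C) ≤ d(A,B) + d(B,C) for all A, B, C ∈ X. -/
/-- If a similarity `S` on `X` (symmetric, `[0,1]`-valued, `S A A = 1`)
admits an LSH scheme, i.e. a probability distribution over hash functions `h : X → ℕ`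
with `Pr_h[h A = h B] = S A B`, then the distance `1 - S` satisfies the triangle
inequality. -/
theorem lsh_implies_triangle_inequality
    {X : Type*} (S : X → X → ℝ)
    (hsymm : ∀ A B : X, S A B = S B A)
    (hrange : ∀ A B : X, S A B ∈ Set.Icc (0 : ℝ) 1)
    (hrefl : ∀ A : X, S A A = 1)
    (μ : PMF (X → ℕ))
    (hLSH : ∀ A B : X,
      μ.toOuterMeasure {h : X → ℕ | h A = h B} = ENNReal.ofReal (S A B)) :
    ∀ A B C : X, 1 - S A C ≤ (1 - S A B) + (1 - S B C) := by
  intro A B C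
  letI : MeasurableSpace (X → ℕ) := ⊤
  have hmeas : ∀ s : Set (X → ℕ), MeasurableSet s := fun s => trivial
  have key : ∀ A B : X,
      μ.toMeasure {h : X → ℕ | h A ≠ h B} = ENNReal.ofReal (1 - S A B) := by
    intro A B
    have hset : {h : X → ℕ | h A ≠ h B} = {h : X → ℕ | h A = h B}ᶜ := rfl
    rw [hset, MeasureTheory.measure_compl (hmeas _) (MeasureTheory.measure_ne_top _ _)]
    have h1 : μ.toMeasure {h : X → ℕ | h A = h B} = ENNReal.ofReal (S A B) := by
      rw [PMF.toMeasure_apply μ (hmeas _), ← PMF.toOuterMeasure_apply, hLSH]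
    rw [h1, MeasureTheory.measure_univ,
      ENNReal.ofReal_sub _ (hrange A B).1, ENNReal.ofReal_one]
  have hsub : {h : X → ℕ | h A ≠ h C} ⊆
      {h : X → ℕ | h A ≠ h B} ∪ {h : X → ℕ | h B ≠ h C} := by
    intro h hh
    by_contra hc
    simp only [Set.mem_union, Set.mem_setOf_eq, not_or, not_not] at hc
    exact hh (hc.1.trans hc.2)
  have hle : μ.toMeasure {h : X → ℕ | h A ≠ h C} ≤
      μ.toMeasure {h : X → ℕ | h A ≠ h B} + μ.toMeasure {h : X → ℕ | h B ≠ h C} :=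
    le_trans (MeasureTheory.measure_mono hsub) (MeasureTheory.measure_union_le _ _)
  rw [key, key, key, ← ENNReal.ofReal_add (by linarith [(hrange A B).2])
    (by linarith [(hrange B C).2])] at hle
  exact (ENNReal.ofReal_le_ofReal_iff (by linarith [(hrange A B).2, (hrange B C).2])).1 hle
end

section
/- Let x, y > 0 and 0 ≤ z < z' with z' ≥ max(x, y, z). Then for every finite universe U, the function d(A,B) = 1 − S_{x,y,z,z'}(A,B) is a metric on the subsets of U: d(A,B) ≥ 0, d(A,B) = 0 if and only if A = B, d(A,B) = d(B,A), and d(A,C) ≤ d(A,B) + d(B,C) for all A, B, C ⊆ U. -/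
/-- The rational set similarity `S_{x,y,z,z'}` of `A, B ⊆ U` for a finite universe `U`:
`N(A,B)/D(A,B)` where `N(A,B) = x|A∩B| + y|U∖(A∪B)| + z|A△B|` and
`D(A,B) = x|A∩B| + y|U∖(A∪B)| + z'|A△B|`, with value `1` when `D(A,B) = 0`. -/
noncomputable def ratSim {U : Type*} [Fintype U] [DecidableEq U]
    (x y z z' : ℝ) (A B : Finset U) : ℝ :=
  if x * ((A ∩ B).card : ℝ) + y * (((A ∪ B)ᶜ : Finset U).card : ℝ)
      + z' * ((symmDiff A B).card : ℝ) = 0 then 1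
  else (x * ((A ∩ B).card : ℝ) + y * (((A ∪ B)ᶜ : Finset U).card : ℝ)
      + z * ((symmDiff A B).card : ℝ))
    / (x * ((A ∩ B).card : ℝ) + y * (((A ∪ B)ᶜ : Finset U).card : ℝ)
      + z' * ((symmDiff A B).card : ℝ))

section aux
variable {U : Type*} [Fintype U] [DecidableEq U]

lemma ratSim_aux_card_split (A B : Finset U) :
    ((A ∩ B).card : ℝ) + (((A ∪ B)ᶜ : Finset U).card : ℝ) + ((symmDiff A B).card : ℝ)
      = (Fintype.card U : ℝ) := by
  have h1 : (A ∩ B) ∪ symmDiff A B = A ∪ B := by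
    ext u; simp [Finset.mem_symmDiff]; tauto
  have h2 : Disjoint (A ∩ B) (symmDiff A B) := by
    simp [Finset.disjoint_left, Finset.mem_symmDiff]; tauto
  have h3 : (A ∩ B).card + (symmDiff A B).card = (A ∪ B).card := by
    rw [← Finset.card_union_of_disjoint h2, h1]
  have h4 := Finset.card_add_card_compl (A ∪ B)
  have : (A ∩ B).card + ((A ∪ B)ᶜ : Finset U).card + (symmDiff A B).card = Fintype.card U := by
    omega
  exact_mod_cast this

lemma ratSim_aux_one_sub (x y z z' : ℝ) (A B : Finset U) :
    1 - ratSim x y z z' A B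
      = ((z' - z) * ((symmDiff A B).card : ℝ))
        / (x * ((A ∩ B).card : ℝ) + y * (((A ∪ B)ᶜ : Finset U).card : ℝ)
          + z' * ((symmDiff A B).card : ℝ)) := by
  rcases eq_or_ne (x * ((A ∩ B).card : ℝ) + y * (((A ∪ B)ᶜ : Finset U).card : ℝ)
      + z' * ((symmDiff A B).card : ℝ)) 0 with h | h
  · rw [ratSim, if_pos h, h, div_zero]; ring
  · rw [ratSim, if_neg h, one_sub_div h]
    congr 1; ring

lemma ratSim_aux_s_le {x y z' : ℝ} (hx : 0 < x) (hy : 0 < y) (hxz : x ≤ z') (hyz : y ≤ z')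
    (A B C : Finset U) :
    x * ((A ∩ B).card : ℝ) + y * (((A ∪ B)ᶜ : Finset U).card : ℝ)
      ≤ x * ((A ∩ C).card : ℝ) + y * (((A ∪ C)ᶜ : Finset U).card : ℝ)
        + z' * ((symmDiff B C).card : ℝ) := by
  have h1 : A ∩ B ⊆ (A ∩ C) ∪ (B \ C) := by
    intro u; simp; tauto
  have h2 : ((A ∪ B)ᶜ : Finset U) ⊆ ((A ∪ C)ᶜ : Finset U) ∪ (C \ B) := by
    intro u; simp; tauto
  have c1 : ((A ∩ B).card : ℝ) ≤ ((A ∩ C).card : ℝ) + ((B \ C).card : ℝ) := by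
    have := (Finset.card_le_card h1).trans (Finset.card_union_le _ _)
    exact_mod_cast this
  have c2 : (((A ∪ B)ᶜ : Finset U).card : ℝ)
      ≤ (((A ∪ C)ᶜ : Finset U).card : ℝ) + ((C \ B).card : ℝ) := by
    have := (Finset.card_le_card h2).trans (Finset.card_union_le _ _)
    exact_mod_cast this
  have hsd : ((symmDiff B C).card : ℝ) = ((B \ C).card : ℝ) + ((C \ B).card : ℝ) := by
    have : (symmDiff B C).card = (B \ C).card + (C \ B).card :=
      Finset.card_union_of_disjoint disjoint_sdiff_sdiff
    exact_mod_cast this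
  have b1 : (0:ℝ) ≤ ((B \ C).card : ℝ) := Nat.cast_nonneg _
  have b2 : (0:ℝ) ≤ ((C \ B).card : ℝ) := Nat.cast_nonneg _
  nlinarith [mul_le_mul_of_nonneg_left c1 hx.le, mul_le_mul_of_nonneg_left c2 hy.le,
    mul_le_mul_of_nonneg_right hxz b1, mul_le_mul_of_nonneg_right hyz b2]

lemma ratSim_aux_tri {z' s1 s2 s3 m1 m2 m3 : ℝ}
    (hm1 : 0 ≤ m1) (hm2 : 0 ≤ m2) (hm3 : 0 ≤ m3) (hs3 : 0 ≤ s3)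
    (hz' : 0 ≤ z')
    (hm : m3 ≤ m1 + m2) (h1 : s1 ≤ s3 + z' * m2) (h2 : s2 ≤ s3 + z' * m1)
    (d1 : 0 < s1 + z' * m1) (d2 : 0 < s2 + z' * m2) (d3 : 0 < s3 + z' * m3) :
    m3 / (s3 + z' * m3) ≤ m1 / (s1 + z' * m1) + m2 / (s2 + z' * m2) := by
  have hT : 0 < s3 + z' * (m1 + m2) := by nlinarith
  have step1 : m3 / (s3 + z' * m3) ≤ (m1 + m2) / (s3 + z' * (m1 + m2)) := by
    rw [div_le_div_iff₀ d3 hT]; nlinarith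
  have step2 : m1 / (s3 + z' * (m1 + m2)) ≤ m1 / (s1 + z' * m1) := by
    rw [div_le_div_iff₀ hT d1]; nlinarith
  have step3 : m2 / (s3 + z' * (m1 + m2)) ≤ m2 / (s2 + z' * m2) := by
    rw [div_le_div_iff₀ hT d2]; nlinarith
  have : (m1 + m2) / (s3 + z' * (m1 + m2))
      = m1 / (s3 + z' * (m1 + m2)) + m2 / (s3 + z' * (m1 + m2)) := add_div _ _ _
  linarith

lemma ratSim_aux_D_pos {x y z' : ℝ} (hx : 0 < x) (hy : 0 < y) (hz' : 0 < z')
    (hn : 0 < Fintype.card U) (A B : Finset U) :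
    0 < x * ((A ∩ B).card : ℝ) + y * (((A ∪ B)ᶜ : Finset U).card : ℝ)
      + z' * ((symmDiff A B).card : ℝ) := by
  have hsplit := ratSim_aux_card_split A B
  have hq : (0:ℝ) ≤ ((A ∩ B).card : ℝ) := Nat.cast_nonneg _
  have hr : (0:ℝ) ≤ (((A ∪ B)ᶜ : Finset U).card : ℝ) := Nat.cast_nonneg _
  have hm : (0:ℝ) ≤ ((symmDiff A B).card : ℝ) := Nat.cast_nonneg _
  have hc : (0:ℝ) < min x (min y z') := lt_min hx (lt_min hy hz')
  have hn' : (0:ℝ) < (Fintype.card U : ℝ) := by exact_mod_cast hn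
  have e1 : min x (min y z') * ((A ∩ B).card : ℝ) ≤ x * ((A ∩ B).card : ℝ) :=
    mul_le_mul_of_nonneg_right (min_le_left _ _) hq
  have e2 : min x (min y z') * (((A ∪ B)ᶜ : Finset U).card : ℝ)
      ≤ y * (((A ∪ B)ᶜ : Finset U).card : ℝ) :=
    mul_le_mul_of_nonneg_right ((min_le_right _ _).trans (min_le_left _ _)) hr
  have e3 : min x (min y z') * ((symmDiff A B).card : ℝ) ≤ z' * ((symmDiff A B).card : ℝ) :=
    mul_le_mul_of_nonneg_right ((min_le_right _ _).trans (min_le_right _ _)) hm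
  nlinarith

end aux

/-- for `x, y > 0`, `0 ≤ z < z'` and `z' ≥ max(x,y,z)`,
`d(A,B) = 1 - S_{x,y,z,z'}(A,B)` is a metric on the subsets of any finite universe. -/
theorem one_sub_ratSim_is_metric
    (x y z z' : ℝ) (hx : 0 < x) (hy : 0 < y) (hz : 0 ≤ z) (hzz' : z < z')
    (hmax : max (max x y) z ≤ z')
    (U : Type*) [Fintype U] [DecidableEq U] :
    (∀ A B : Finset U, 0 ≤ 1 - ratSim x y z z' A B) ∧
    (∀ A B : Finset U, 1 - ratSim x y z z' A B = 0 ↔ A = B) ∧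
    (∀ A B : Finset U, 1 - ratSim x y z z' A B = 1 - ratSim x y z z' B A) ∧
    (∀ A B C : Finset U,
      1 - ratSim x y z z' A C
        ≤ (1 - ratSim x y z z' A B) + (1 - ratSim x y z z' B C)) := by
  have hz' : 0 < z' := lt_of_le_of_lt hz hzz'
  have hxz : x ≤ z' := le_trans (le_trans (le_max_left x y) (le_max_left _ z)) hmax
  have hyz : y ≤ z' := le_trans (le_trans (le_max_right x y) (le_max_left _ z)) hmax
  have hDnn : ∀ A B : Finset U,
      0 ≤ x * ((A ∩ B).card : ℝ) + y * (((A ∪ B)ᶜ : Finset U).card : ℝ)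
        + z' * ((symmDiff A B).card : ℝ) := fun A B => by
    have hq : (0:ℝ) ≤ ((A ∩ B).card : ℝ) := Nat.cast_nonneg _
    have hr : (0:ℝ) ≤ (((A ∪ B)ᶜ : Finset U).card : ℝ) := Nat.cast_nonneg _
    have hm : (0:ℝ) ≤ ((symmDiff A B).card : ℝ) := Nat.cast_nonneg _
    nlinarith
  refine ⟨fun A B => ?_, fun A B => ?_, fun A B => ?_, fun A B C => ?_⟩
  · rw [ratSim_aux_one_sub]
    exact div_nonneg (mul_nonneg (by linarith) (Nat.cast_nonneg _)) (hDnn A B)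
  · rw [ratSim_aux_one_sub]
    rcases Nat.eq_zero_or_pos (Fintype.card U) with hn | hn
    · have hA : A = ∅ := Finset.card_eq_zero.mp (le_antisymm (hn ▸ (A.card_le_univ.trans_eq (Finset.card_univ))) (Nat.zero_le _))
      have hB : B = ∅ := Finset.card_eq_zero.mp (le_antisymm (hn ▸ (B.card_le_univ.trans_eq (Finset.card_univ))) (Nat.zero_le _))
      subst hA; subst hB
      simp
    · have hD := ratSim_aux_D_pos hx hy hz' hn A B
      constructor
      · intro h
        rcases (div_eq_zero_iff.mp h) with h' | h'
        · rcases mul_eq_zero.mp h' with h'' | h''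
          · exact absurd h'' (by linarith)
          · have : (symmDiff A B).card = 0 := by exact_mod_cast h''
            have := Finset.card_eq_zero.mp this
            rw [← Finset.bot_eq_empty] at this
            exact symmDiff_eq_bot.mp this
        · exact absurd h' hD.ne'
      · intro h
        subst h
        simp [symmDiff_self]
  · rw [ratSim_aux_one_sub, ratSim_aux_one_sub, Finset.inter_comm, Finset.union_comm,
      symmDiff_comm]
  · rw [ratSim_aux_one_sub, ratSim_aux_one_sub, ratSim_aux_one_sub]
    rcases Nat.eq_zero_or_pos (Fintype.card U) with hn | hn
    · have : ∀ P Q : Finset U, ((symmDiff P Q).card : ℝ) = 0 := fun P Q => by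
        have := (symmDiff P Q).card_le_univ.trans_eq Finset.card_univ
        have : (symmDiff P Q).card = 0 := by omega
        exact_mod_cast this
      simp [this]
    · have d1 := ratSim_aux_D_pos hx hy hz' hn A B
      have d2 := ratSim_aux_D_pos hx hy hz' hn B C
      have d3 := ratSim_aux_D_pos hx hy hz' hn A C
      have hm : ((symmDiff A C).card : ℝ)
          ≤ ((symmDiff A B).card : ℝ) + ((symmDiff B C).card : ℝ) := by
        have hsub : symmDiff A C ⊆ symmDiff A B ∪ symmDiff B C := symmDiff_triangle A B C
        have := (Finset.card_le_card hsub).trans (Finset.card_union_le _ _)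
        exact_mod_cast this
      have h1 : x * ((A ∩ B).card : ℝ) + y * (((A ∪ B)ᶜ : Finset U).card : ℝ)
          ≤ x * ((A ∩ C).card : ℝ) + y * (((A ∪ C)ᶜ : Finset U).card : ℝ)
            + z' * ((symmDiff B C).card : ℝ) := ratSim_aux_s_le hx hy hxz hyz A B C
      have h2 : x * ((B ∩ C).card : ℝ) + y * (((B ∪ C)ᶜ : Finset U).card : ℝ)
          ≤ x * ((A ∩ C).card : ℝ) + y * (((A ∪ C)ᶜ : Finset U).card : ℝ)
            + z' * ((symmDiff A B).card : ℝ) := by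
        have := ratSim_aux_s_le hx hy hxz hyz C B A
        rw [Finset.inter_comm C B, Finset.union_comm C B, Finset.inter_comm C A,
          Finset.union_comm C A, symmDiff_comm B A] at this
        exact this
      have key := ratSim_aux_tri (z' := z')
        (s1 := x * ((A ∩ B).card : ℝ) + y * (((A ∪ B)ᶜ : Finset U).card : ℝ))
        (s2 := x * ((B ∩ C).card : ℝ) + y * (((B ∪ C)ᶜ : Finset U).card : ℝ))
        (s3 := x * ((A ∩ C).card : ℝ) + y * (((A ∪ C)ᶜ : Finset U).card : ℝ))
        (m1 := ((symmDiff A B).card : ℝ)) (m2 := ((symmDiff B C).card : ℝ))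
        (m3 := ((symmDiff A C).card : ℝ))
        (Nat.cast_nonneg _) (Nat.cast_nonneg _) (Nat.cast_nonneg _)
        (by positivity) hz'.le hm h1 h2
        (by linarith [d1]) (by linarith [d2]) (by linarith [d3])
      have hzz : (0:ℝ) ≤ z' - z := by linarith
      calc (z' - z) * ((symmDiff A C).card : ℝ)
            / (x * ((A ∩ C).card : ℝ) + y * (((A ∪ C)ᶜ : Finset U).card : ℝ)
              + z' * ((symmDiff A C).card : ℝ))
          = (z' - z) * (((symmDiff A C).card : ℝ)
            / (x * ((A ∩ C).card : ℝ) + y * (((A ∪ C)ᶜ : Finset U).card : ℝ)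
              + z' * ((symmDiff A C).card : ℝ))) := by rw [mul_div_assoc]
        _ ≤ (z' - z) * (((symmDiff A B).card : ℝ)
            / (x * ((A ∩ B).card : ℝ) + y * (((A ∪ B)ᶜ : Finset U).card : ℝ)
              + z' * ((symmDiff A B).card : ℝ))
            + ((symmDiff B C).card : ℝ)
            / (x * ((B ∩ C).card : ℝ) + y * (((B ∪ C)ᶜ : Finset U).card : ℝ)
              + z' * ((symmDiff B C).card : ℝ))) := by
            apply mul_le_mul_of_nonneg_left _ hzz
            convert key using 3 <;> ring
        _ = _ := by ring
end

section
/- Let U be a finite universe, x, y, z ≥ 0, A, B ⊆ U, k ∈ ℕ, and let (X_i)_{i∈U} be independent Bernoulli random variables with Pr[X_i = 1] = 2^{-k}. Let N_k = x·Σ_{i∈A∩B} X_i + y·Σ_{i∈U∖(A∪B)} X_i + z·Σ_{i∈A△B} X_i and let N(A,B) = x·|A∩B| + y·|U∖(A∪B)| + z·|A△B| > 0. Then for every ε > 0, Pr[ |N_k − E[N_k]| ≥ ε·E[N_k] ] ≤ max{x+y, z+y, y}·2^k / (ε²·N(A,B)). -/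
open MeasureTheory ProbabilityTheory

/-- Chebyshev-type deviation bound for the sampled numerator
`N_k = x·Σ_{i∈A∩B} X_i + y·Σ_{i∈U∖(A∪B)} X_i + z·Σ_{i∈A△B} X_i`, where the
`X_i` are independent Bernoulli(`2^{-k}`) random variables:
for every `ε > 0`, `Pr[|N_k − E[N_k]| ≥ ε·E[N_k]] ≤ max{x+y, z+y, y}·2^k / (ε²·N(A,B))`,
where `N(A,B) = x|A∩B| + y|U∖(A∪B)| + z|A△B| > 0`. -/
theorem sampled_numerator_chebyshev
    {U : Type*} [Fintype U] [DecidableEq U]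
    (x y z : ℝ) (hx : 0 ≤ x) (hy : 0 ≤ y) (hz : 0 ≤ z)
    (A B : Finset U) (k : ℕ)
    {Ω : Type*} [MeasurableSpace Ω] (μ : Measure Ω) [IsProbabilityMeasure μ]
    (X : U → Ω → ℝ) (hmeas : ∀ i, Measurable (X i))
    (hindep : iIndepFun X μ)
    (h01 : ∀ i ω, X i ω = 0 ∨ X i ω = 1)
    (hq : ∀ i, μ {ω | X i ω = 1} = ENNReal.ofReal ((1 / 2 : ℝ) ^ k))
    (Nk : Ω → ℝ)
    (hNk : ∀ ω, Nk ω = x * ∑ i ∈ A ∩ B, X i ω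
      + y * ∑ i ∈ ((A ∪ B)ᶜ : Finset U), X i ω
      + z * ∑ i ∈ symmDiff A B, X i ω)
    (NAB : ℝ)
    (hNAB : NAB = x * ((A ∩ B).card : ℝ)
      + y * (((A ∪ B)ᶜ : Finset U).card : ℝ) + z * ((symmDiff A B).card : ℝ))
    (hNpos : 0 < NAB)
    (ε : ℝ) (hε : 0 < ε) :
    μ {ω | ε * (∫ ω', Nk ω' ∂μ) ≤ |Nk ω - ∫ ω', Nk ω' ∂μ|}
      ≤ ENNReal.ofReal (max (max (x + y) (z + y)) y * 2 ^ k / (ε ^ 2 * NAB)) := by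
  classical
  set p : ℝ := (1 / 2 : ℝ) ^ k with hp_def
  have hp0 : 0 < p := by positivity
  have hp2 : p * 2 ^ k = 1 := by
    rw [hp_def, one_div, inv_pow, inv_mul_cancel₀ (by positivity)]
  set M : ℝ := max (max (x + y) (z + y)) y with hM_def
  have hMy : y ≤ M := le_max_right _ _
  have hM0 : 0 ≤ M := hy.trans hMy
  have hMx : x ≤ M := le_trans (by linarith) ((le_max_left _ _).trans (le_max_left _ _))
  have hMz : z ≤ M := le_trans (by linarith) ((le_max_right _ _).trans (le_max_left _ _))
  -- basic facts about the X i
  have hXsq : ∀ i ω, X i ω ^ 2 = X i ω := by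
    intro i ω; rcases h01 i ω with h | h <;> simp [h]
  have hXint : ∀ i, ∫ ω, X i ω ∂μ = p := by
    intro i
    have hS : MeasurableSet {ω | X i ω = 1} := (hmeas i) (measurableSet_singleton 1)
    have hXind : X i = Set.indicator {ω | X i ω = 1} (fun _ => (1 : ℝ)) := by
      funext ω
      rcases h01 i ω with h | h <;>
        simp [Set.indicator_apply, Set.mem_setOf_eq, h]
    rw [hXind, integral_indicator_const _ hS, measureReal_def, hq i, smul_eq_mul, mul_one,
      ENNReal.toReal_ofReal hp0.le]
  have hXmem : ∀ i, MemLp (X i) 2 μ := by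
    intro i
    refine memLp_of_bounded (a := 0) (b := 1) (Filter.Eventually.of_forall fun ω => ?_)
      (hmeas i).aestronglyMeasurable 2
    rcases h01 i ω with h | h <;> simp [h]
  have hXvar : ∀ i, variance (X i) μ = p - p ^ 2 := by
    intro i
    rw [variance_eq_sub (hXmem i)]
    have : (fun ω => X i ω ^ 2) = X i := funext fun ω => hXsq i ω
    simp only [Pi.pow_apply]
    rw [this, hXint i]
  have hXvar_le : ∀ i, variance (X i) μ ≤ p := fun i => by
    rw [hXvar i]; nlinarith
  -- the coefficient function
  set s1 : Finset U := A ∩ B with hs1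
  set s2 : Finset U := (A ∪ B)ᶜ with hs2
  set s3 : Finset U := symmDiff A B with hs3
  set c : U → ℝ := fun i => if i ∈ s1 then x else if i ∈ s2 then y else
    if i ∈ s3 then z else 0 with hc_def
  have hd12 : Disjoint s1 s2 := by
    rw [Finset.disjoint_left]
    intro a ha hb
    simp only [hs1, hs2, Finset.mem_inter, Finset.mem_compl, Finset.mem_union] at ha hb
    tauto
  have hd13 : Disjoint s1 s3 := by
    rw [Finset.disjoint_left]
    intro a ha hb
    simp only [hs1, hs3, Finset.mem_inter, Finset.mem_symmDiff] at ha hb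
    tauto
  have hd23 : Disjoint s2 s3 := by
    rw [Finset.disjoint_left]
    intro a ha hb
    simp only [hs2, hs3, Finset.mem_compl, Finset.mem_union, Finset.mem_symmDiff] at ha hb
    tauto
  have huniv : s1 ∪ (s2 ∪ s3) = Finset.univ := by
    ext i
    simp only [hs1, hs2, hs3, Finset.mem_union, Finset.mem_inter, Finset.mem_compl,
      Finset.mem_symmDiff, Finset.mem_univ, iff_true]
    tauto
  have hsplit : ∀ f : U → ℝ, ∑ i, c i * f i
      = x * ∑ i ∈ s1, f i + y * ∑ i ∈ s2, f i + z * ∑ i ∈ s3, f i := by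
    intro f
    have h1 : ∀ i ∈ s1, c i * f i = x * f i := by
      intro i hi; simp only [hc_def, if_pos hi]
    have h2 : ∀ i ∈ s2, c i * f i = y * f i := by
      intro i hi
      have : i ∉ s1 := Finset.disjoint_right.mp hd12 hi
      simp only [hc_def, if_neg this, if_pos hi]
    have h3 : ∀ i ∈ s3, c i * f i = z * f i := by
      intro i hi
      have n1 : i ∉ s1 := Finset.disjoint_right.mp hd13 hi
      have n2 : i ∉ s2 := Finset.disjoint_right.mp hd23 hi
      simp only [hc_def, if_neg n1, if_neg n2, if_pos hi]
    rw [← huniv, Finset.sum_union (by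
        rw [Finset.disjoint_union_right]; exact ⟨hd12, hd13⟩),
      Finset.sum_union hd23, Finset.sum_congr rfl h1, Finset.sum_congr rfl h2,
      Finset.sum_congr rfl h3, ← Finset.mul_sum, ← Finset.mul_sum, ← Finset.mul_sum]
    ring
  have hcM : ∀ i, 0 ≤ c i ∧ c i ≤ M := by
    intro i
    simp only [hc_def]
    split_ifs <;> constructor <;> first | assumption | exact le_refl _ | linarith
  -- Nk as a sum
  set Y : U → Ω → ℝ := fun i ω => c i * X i ω with hY_def
  have hNk_sum : Nk = ∑ i, Y i := by
    funext ω
    rw [hNk ω]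
    have := hsplit (fun i => X i ω)
    simp only [Finset.sum_apply, hY_def]
    rw [this]
  have hYmem : ∀ i, MemLp (Y i) 2 μ := fun i => (hXmem i).const_mul (c i)
  have hNkmem : MemLp Nk 2 μ := by
    rw [hNk_sum]; exact memLp_finset_sum' _ fun i _ => hYmem i
  -- expectation
  have hE : ∫ ω, Nk ω ∂μ = p * NAB := by
    rw [hNk_sum]
    simp only [Finset.sum_apply]
    rw [integral_finset_sum _ fun i _ =>
      ((hXmem i).integrable one_le_two).const_mul (c i)]
    have : ∀ i ∈ Finset.univ, ∫ ω, Y i ω ∂μ = c i * p := by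
      intro i _
      simp only [hY_def]
      rw [integral_const_mul, hXint i]
    rw [Finset.sum_congr rfl this, hsplit (fun _ => p)]
    simp only [Finset.sum_const, nsmul_eq_mul]
    rw [hNAB, hs1, hs2, hs3]; ring
  have hEpos : 0 < p * NAB := mul_pos hp0 hNpos
  -- variance
  have hVar : variance Nk μ ≤ M * p * NAB := by
    rw [hNk_sum]
    rw [IndepFun.variance_sum (fun i _ => hYmem i) (fun i _ j _ hij =>
      (hindep.indepFun hij).comp (measurable_const_mul (c i)) (measurable_const_mul (c j)))]
    have hle : ∀ i ∈ Finset.univ, variance (Y i) μ ≤ M * (c i * p) := by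
      intro i _
      have : variance (Y i) μ = c i ^ 2 * variance (X i) μ := variance_const_mul (c i) (X i) μ
      rw [this]
      obtain ⟨hc0, hcM'⟩ := hcM i
      calc c i ^ 2 * variance (X i) μ ≤ c i ^ 2 * p :=
            mul_le_mul_of_nonneg_left (hXvar_le i) (sq_nonneg _)
        _ ≤ M * c i * p := by
            have h' : c i * c i ≤ M * c i := mul_le_mul_of_nonneg_right hcM' hc0
            nlinarith [hp0.le]
        _ = M * (c i * p) := by ring
    calc ∑ i, variance (Y i) μ ≤ ∑ i, M * (c i * p) := Finset.sum_le_sum hle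
        _ = M * ∑ i, c i * p := by rw [Finset.mul_sum]
        _ = M * (p * NAB) := by
            rw [hsplit (fun _ => p)]
            simp only [Finset.sum_const, nsmul_eq_mul]
            rw [hNAB, hs1, hs2, hs3]; ring
        _ = M * p * NAB := by ring
  -- Chebyshev
  have hc_pos : 0 < ε * ∫ ω, Nk ω ∂μ := by rw [hE]; exact mul_pos hε hEpos
  have hcheb := meas_ge_le_variance_div_sq (μ := μ) hNkmem hc_pos
  refine hcheb.trans (ENNReal.ofReal_le_ofReal ?_)
  rw [hE, div_le_div_iff₀ (by positivity) (by positivity)]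
  calc variance Nk μ * (ε ^ 2 * NAB) ≤ (M * p * NAB) * (ε ^ 2 * NAB) :=
        mul_le_mul_of_nonneg_right hVar (by positivity)
    _ = M * 2 ^ k * (ε * (p * NAB)) ^ 2 := by
        linear_combination (-(M * ε ^ 2 * p * NAB ^ 2)) * hp2
end

section
/- Let 0 < ε, δ, r < 1, let x, y ≥ 0 and 0 ≤ z ≤ z' with z' ≥ max(x, y, z), and let A, B be subsets of a finite universe U with S_{x,y,z,z'}(A,B) ≥ r. Fix k ∈ ℕ and let (X_i)_{i∈U} be independent Bernoulli random variables with Pr[X_i = 1] = 2^{-k}, S_k = {i : X_i = 1}, A_k = A ∩ S_k, B_k = B ∩ S_k. If 2^k ≤ (ε/5)²·δ·r·N(A,B) / max{x+y, z'+y, z+y}, then with probability at least 1 − 2δ, (1−ε)·S_{x,y,z,z'}(A,B) ≤ S_{x,y,z,z'}(A_k, B_k) ≤ (1+ε)·S_{x,y,z,z'}(A,B), where S_{x,y,z,z'}(A_k, B_k) is the rational set similarity of A_k and B_k computed with respect to the universe S_k. -/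
open MeasureTheory ProbabilityTheory

/-- The rational set similarity of `A, B` computed with respect to the universe `V`:
`N/D` with `N = x|A∩B| + y|V∖(A∪B)| + z|A△B|`, `D = x|A∩B| + y|V∖(A∪B)| + z'|A△B|`,
and value `1` when `D = 0`. -/
noncomputable def ratSimOn {α : Type*} [DecidableEq α]
    (x y z z' : ℝ) (V A B : Finset α) : ℝ :=
  if x * ((A ∩ B).card : ℝ) + y * ((V \ (A ∪ B)).card : ℝ)
      + z' * ((symmDiff A B).card : ℝ) = 0 then 1
  else (x * ((A ∩ B).card : ℝ) + y * ((V \ (A ∪ B)).card : ℝ)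
      + z * ((symmDiff A B).card : ℝ))
    / (x * ((A ∩ B).card : ℝ) + y * ((V \ (A ∪ B)).card : ℝ)
      + z' * ((symmDiff A B).card : ℝ))

section Aux

variable {U : Type*} [Fintype U] [DecidableEq U]

/-- Splitting a sum over the universe into the three parts `A ∩ B`, `A ∆ B`, `(A ∪ B)ᶜ`. -/
lemma ratSim_sum_split (A B : Finset U) (x w y : ℝ) (f : U → ℝ) :
    ∑ i, ((if i ∈ A ∩ B then x else if i ∈ A ∪ B then w else y) * f i)
      = x * ∑ i ∈ A ∩ B, f i + w * ∑ i ∈ symmDiff A B, f i + y * ∑ i ∈ (A ∪ B)ᶜ, f i := by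
  rw [← Finset.sum_add_sum_compl (A ∪ B)]
  rw [← Finset.sum_inter_add_sum_sdiff (A ∪ B) (A ∩ B)]
  have h1 : (A ∪ B) ∩ (A ∩ B) = A ∩ B := by ext i; simp; tauto
  have h2 : (A ∪ B) \ (A ∩ B) = symmDiff A B := by ext i; simp [Finset.mem_symmDiff]; tauto
  rw [h1, h2, Finset.mul_sum, Finset.mul_sum, Finset.mul_sum]
  congr 1; congr 1
  · exact Finset.sum_congr rfl fun i hi => by
      simp only [Finset.mem_inter] at hi; rw [if_pos (by simp [hi.1, hi.2])]
  · refine Finset.sum_congr rfl fun i hi => ?_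
    rw [Finset.mem_symmDiff] at hi
    rcases hi with ⟨h, h'⟩ | ⟨h, h'⟩ <;>
      rw [if_neg (by simp only [Finset.mem_inter]; tauto), if_pos (by simp [h])]
  · refine Finset.sum_congr rfl fun i hi => ?_
    simp only [Finset.mem_compl, Finset.mem_union, not_or] at hi
    rw [if_neg (by simp [hi.1, hi.2]), if_neg (by simp [hi.1, hi.2])]

lemma ratSim_card_sum (T Sk : Finset U) (f : U → ℝ)
    (h : ∀ i, (i ∈ Sk → f i = 1) ∧ (i ∉ Sk → f i = 0)) :
    ((T ∩ Sk).card : ℝ) = ∑ i ∈ T, f i := by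
  have : ∀ i ∈ T, f i = if i ∈ Sk then (1:ℝ) else 0 := fun i _ => by
    by_cases hi : i ∈ Sk <;> simp [hi, (h i).1, (h i).2]
  rw [Finset.sum_congr rfl this, Finset.sum_boole, ← Finset.filter_mem_eq_inter]

/-- Moments of a Bernoulli random variable. -/
lemma ratSim_bernoulli {Ω : Type*} [MeasurableSpace Ω] (μ : Measure Ω) [IsProbabilityMeasure μ]
    (f : Ω → ℝ) (hf : Measurable f) (h01 : ∀ ω, f ω = 0 ∨ f ω = 1) (p : ℝ) (hp : 0 ≤ p)
    (hq : μ {ω | f ω = 1} = ENNReal.ofReal p) :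
    μ[f] = p ∧ MemLp f 2 μ ∧ variance f μ = p - p^2 := by
  have hmem : MemLp f 2 μ := by
    apply memLp_of_bounded (a := 0) (b := 1) (ae_of_all _ fun ω => ?_) hf.aestronglyMeasurable 2
    rcases h01 ω with h | h <;> simp [h, Set.mem_Icc]
  have hind : f = ({ω | f ω = 1}).indicator (fun _ => (1:ℝ)) := by
    funext ω; rcases h01 ω with h | h <;> simp [Set.indicator, h]
  have hms : MeasurableSet {ω | f ω = 1} := hf (measurableSet_singleton 1)
  have hE : μ[f] = p := by
    rw [hind, integral_indicator_const _ hms]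
    simp [measureReal_def, hq, ENNReal.toReal_ofReal hp]
  refine ⟨hE, hmem, ?_⟩
  have hsq : f ^ 2 = f := by funext ω; rcases h01 ω with h | h <;> simp [h]
  rw [variance_eq_sub hmem, hsq, hE]

/-- Mean and variance of a weighted sum of independent random variables. -/
lemma ratSim_sum_moments {Ω : Type*} [MeasurableSpace Ω] (μ : Measure Ω)
    [IsProbabilityMeasure μ] (X : U → Ω → ℝ) (hX2 : ∀ i, MemLp (X i) 2 μ)
    (hindep : iIndepFun X μ) (c : U → ℝ) :
    variance (fun ω => ∑ i, c i * X i ω) μ = ∑ i, (c i)^2 * variance (X i) μ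
      ∧ μ[fun ω => ∑ i, c i * X i ω] = ∑ i, c i * μ[X i]
      ∧ MemLp (fun ω => ∑ i, c i * X i ω) 2 μ := by
  have h1 : (fun ω => ∑ i, c i * X i ω) = ∑ i : U, (fun ω => c i * X i ω) := by
    funext ω; simp
  have hmem : ∀ i ∈ Finset.univ, MemLp (fun ω => c i * X i ω) 2 μ :=
    fun i _ => (hX2 i).const_mul (c i)
  refine ⟨?_, ?_, ?_⟩
  · rw [h1, IndepFun.variance_sum hmem
      (fun i _ j _ hij => (hindep.indepFun hij).comp
        (measurable_const_mul (c i)) (measurable_const_mul (c j)))]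
    exact Finset.sum_congr rfl fun i _ => variance_const_mul (c i) (X i) μ
  · rw [integral_finset_sum _ (fun i _ => ((hX2 i).integrable one_le_two).const_mul (c i))]
    exact Finset.sum_congr rfl fun i _ => integral_const_mul _ _
  · rw [h1]; exact memLp_finset_sum' _ hmem

end Aux

set_option maxHeartbeats 2000000 in
/-- subsampling preserves a metric rational set similarity up to a
`(1±ε)` factor with probability at least `1 - 2δ`, provided `S_{x,y,z,z'}(A,B) ≥ r`
and `2^k ≤ (ε/5)²·δ·r·N(A,B) / max{x+y, z'+y, z+y}`. Here `S_k = {i : X_i = 1}` for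
independent Bernoulli(`2^{-k}`) variables `X_i`, `A_k = A ∩ S_k`, `B_k = B ∩ S_k`, and
the sampled similarity is computed with respect to the universe `S_k`. -/
theorem sampled_ratSim_approx
    (ε δ r : ℝ) (hε : 0 < ε) (hε1 : ε < 1) (hδ : 0 < δ) (hδ1 : δ < 1)
    (hr : 0 < r) (hr1 : r < 1)
    (x y z z' : ℝ) (hx : 0 ≤ x) (hy : 0 ≤ y) (hz : 0 ≤ z) (hzz' : z ≤ z')
    (hmax : max (max x y) z ≤ z')
    {U : Type*} [Fintype U] [DecidableEq U] (A B : Finset U)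
    (hsim : r ≤ ratSimOn x y z z' (Finset.univ : Finset U) A B)
    (k : ℕ)
    {Ω : Type*} [MeasurableSpace Ω] (μ : Measure Ω) [IsProbabilityMeasure μ]
    (X : U → Ω → ℝ) (hmeas : ∀ i, Measurable (X i))
    (hindep : iIndepFun X μ)
    (h01 : ∀ i ω, X i ω = 0 ∨ X i ω = 1)
    (hq : ∀ i, μ {ω | X i ω = 1} = ENNReal.ofReal ((1 / 2 : ℝ) ^ k))
    (Sk : Ω → Finset U) (hSk : ∀ ω i, i ∈ Sk ω ↔ X i ω = 1)
    (hk : (2 : ℝ) ^ k ≤ (ε / 5) ^ 2 * δ * r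
        * (x * ((A ∩ B).card : ℝ) + y * (((A ∪ B)ᶜ : Finset U).card : ℝ)
            + z * ((symmDiff A B).card : ℝ))
        / max (max (x + y) (z' + y)) (z + y)) :
    ENNReal.ofReal (1 - 2 * δ)
      ≤ μ {ω | (1 - ε) * ratSimOn x y z z' (Finset.univ : Finset U) A B
              ≤ ratSimOn x y z z' (Sk ω) (A ∩ Sk ω) (B ∩ Sk ω)
            ∧ ratSimOn x y z z' (Sk ω) (A ∩ Sk ω) (B ∩ Sk ω)
              ≤ (1 + ε) * ratSimOn x y z z' (Finset.univ : Finset U) A B} := by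
  classical
  set p : ℝ := (1/2 : ℝ)^k with hp_def
  have hp0 : 0 < p := by positivity
  have hpk : p * 2^k = 1 := by rw [hp_def, ← mul_pow]; norm_num
  set a : ℝ := ((A ∩ B).card : ℝ) with ha_def
  set b : ℝ := (((A ∪ B)ᶜ : Finset U).card : ℝ) with hb_def
  set cc : ℝ := ((symmDiff A B).card : ℝ) with hcc_def
  have ha0 : 0 ≤ a := Nat.cast_nonneg _
  have hb0 : 0 ≤ b := Nat.cast_nonneg _
  have hcc0 : 0 ≤ cc := Nat.cast_nonneg _
  set N : ℝ := x * a + y * b + z * cc with hN_def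
  set D : ℝ := x * a + y * b + z' * cc with hD_def
  set M : ℝ := max (max (x + y) (z' + y)) (z + y) with hM_def
  have hz' : 0 ≤ z' := hz.trans hzz'
  have hM0 : 0 ≤ M := le_trans (by linarith only [hz, hy]) (le_max_right _ _)
  have hMpos : 0 < M := by
    rcases hM0.eq_or_lt with h | h
    · rw [← h, div_zero] at hk
      exact absurd hk (not_le.2 (pow_pos two_pos k))
    · exact h
  have hMx : x ≤ M := le_trans (by linarith only [hy]) ((le_max_left _ _).trans (le_max_left _ _))
  have hMy : y ≤ M := le_trans (by linarith only [hz']) ((le_max_right _ _).trans (le_max_left _ _))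
  have hMz : z ≤ M := le_trans (by linarith only [hy]) (le_max_right _ _)
  have hMz' : z' ≤ M := le_trans (by linarith only [hy]) ((le_max_right _ _).trans (le_max_left _ _))
  have hk' : 2^k * M ≤ (ε/5)^2 * δ * r * N := (le_div_iff₀ hMpos).mp hk
  have hNpos : 0 < N := by
    by_contra h
    push_neg at h
    have h1 : (ε/5)^2 * δ * r * N ≤ 0 :=
      mul_nonpos_of_nonneg_of_nonpos (by positivity) h
    linarith only [h1, hk', mul_pos (pow_pos two_pos k) hMpos]
  have hDN : N ≤ D := by
    have h := mul_le_mul_of_nonneg_right hzz' hcc0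
    simp only [hN_def, hD_def]; linarith only [h]
  have hDpos : 0 < D := lt_of_lt_of_le hNpos hDN
  have hcompl : (Finset.univ \ (A ∪ B) : Finset U) = (A ∪ B)ᶜ :=
    (Finset.compl_eq_univ_sdiff _).symm
  have hSval : ratSimOn x y z z' (Finset.univ : Finset U) A B = N / D := by
    rw [ratSimOn, hcompl, if_neg (by rw [← hD_def]; exact hDpos.ne')]
  -- key bound on M
  have hMle : M ≤ p * ((ε/5)^2 * δ * r * N) := by
    have h2 : p * (2^k * M) ≤ p * ((ε/5)^2 * δ * r * N) :=
      mul_le_mul_of_nonneg_left hk' hp0.le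
    have h3 : p * (2^k * M) = M := by rw [← mul_assoc, hpk, one_mul]
    linarith only [h2, h3]
  -- Bernoulli moments
  have hbern : ∀ i, μ[X i] = p ∧ MemLp (X i) 2 μ ∧ variance (X i) μ = p - p^2 :=
    fun i => ratSim_bernoulli μ (X i) (hmeas i) (h01 i) p hp0.le (hq i)
  have hX2 : ∀ i, MemLp (X i) 2 μ := fun i => (hbern i).2.1
  -- coefficient function and weighted sums
  set cf : ℝ → U → ℝ := fun w i => if i ∈ A ∩ B then x else if i ∈ A ∪ B then w else y
    with hcf_def
  set W : ℝ → Ω → ℝ := fun w ω => ∑ i, cf w i * X i ω with hW_def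
  have hcf0 : ∀ w, 0 ≤ w → ∀ i, 0 ≤ cf w i := by
    intro w hw i; simp only [hcf_def]; split_ifs <;> assumption
  have hcfM : ∀ w, w ≤ M → ∀ i, cf w i ≤ M := by
    intro w hw i; simp only [hcf_def]; split_ifs <;> assumption
  have hsumcf : ∀ w, ∑ i, cf w i = x * a + w * cc + y * b := by
    intro w
    have h := ratSim_sum_split A B x w y (fun _ => (1:ℝ))
    simp only [mul_one, Finset.sum_const, nsmul_eq_mul] at h
    exact h
  have hmom := fun w => ratSim_sum_moments μ X hX2 hindep (cf w)
  have hmemW : ∀ w, MemLp (W w) 2 μ := fun w => by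
    simp only [hW_def]; exact (hmom w).2.2
  have hmeasW : ∀ w, Measurable (W w) := fun w => by
    simp only [hW_def]
    exact Finset.univ.measurable_sum fun i _ => (hmeas i).const_mul (cf w i)
  have hEW : ∀ w, μ[W w] = p * (x * a + w * cc + y * b) := by
    intro w
    simp only [hW_def]
    rw [(hmom w).2.1]
    have : ∀ i ∈ Finset.univ, cf w i * μ[X i] = cf w i * p :=
      fun i _ => by rw [(hbern i).1]
    rw [Finset.sum_congr rfl this, ← Finset.sum_mul, hsumcf w]
    ring
  have hVW : ∀ w, 0 ≤ w → w ≤ M → variance (W w) μ ≤ p * M * (x * a + w * cc + y * b) := by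
    intro w hw hwM
    simp only [hW_def]
    rw [(hmom w).1]
    calc ∑ i, (cf w i)^2 * variance (X i) μ ≤ ∑ i, M * cf w i * p := by
          refine Finset.sum_le_sum fun i _ => ?_
          rw [(hbern i).2.2]
          have h1 := hcf0 w hw i
          have h2 := hcfM w hwM i
          have e1 : cf w i ^ 2 * (p - p ^ 2) ≤ cf w i ^ 2 * p :=
            mul_le_mul_of_nonneg_left (by nlinarith only [sq_nonneg p]) (sq_nonneg _)
          have e2 : cf w i ^ 2 * p ≤ M * cf w i * p := by
            have : cf w i ^ 2 ≤ M * cf w i := by nlinarith only [h1, h2]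
            exact mul_le_mul_of_nonneg_right this hp0.le
          linarith only [e1, e2]
      _ = p * M * (x * a + w * cc + y * b) := by
          rw [← Finset.sum_mul, ← Finset.mul_sum, hsumcf w]; ring
  -- Chebyshev for the numerator and denominator processes
  have hEWz : μ[W z] = p * N := by rw [hEW z, hN_def]; ring
  have hEWz' : μ[W z'] = p * D := by rw [hEW z', hD_def]; ring
  have cheb : ∀ w C, 0 ≤ w → w ≤ M → x * a + w * cc + y * b = C → N ≤ C →
      μ {ω | ε/5 * (p * C) ≤ |W w ω - μ[W w]|} ≤ ENNReal.ofReal δ := by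
    intro w C hw hwM hC hNC
    have hCpos : 0 < C := lt_of_lt_of_le hNpos hNC
    have hthr : 0 < ε/5 * (p * C) := by positivity
    refine le_trans (meas_ge_le_variance_div_sq (hmemW w) hthr)
      (ENNReal.ofReal_le_ofReal ?_)
    rw [div_le_iff₀ (by positivity)]
    have hv := hVW w hw hwM
    rw [hC] at hv
    -- p * M * C ≤ δ * (ε/5 * (p * C))^2
    have h1 : p * M * C ≤ p * (p * ((ε/5)^2 * δ * r * N)) * C := by
      have h := mul_le_mul_of_nonneg_left hMle (mul_pos hp0 hCpos).le
      nlinarith only [h]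
    have h2 : p * (p * ((ε/5)^2 * δ * r * N)) * C ≤ δ * (ε/5 * (p * C))^2 := by
      have hrN : r * N ≤ C := by
        have h := mul_nonneg (by linarith only [hr1] : (0:ℝ) ≤ 1 - r) hNpos.le
        linarith only [h, hNC]
      have h := mul_le_mul_of_nonneg_left hrN
        (by positivity : (0:ℝ) ≤ (ε/5)^2 * δ * (p^2 * C))
      nlinarith only [h]
    linarith only [hv, h1, h2]
  have chebN := cheb z N hz hMz (by rw [hN_def]; ring) le_rfl
  have chebD := cheb z' D hz' hMz' (by rw [hD_def]; ring) hDN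
  -- bad events
  set badN : Set Ω := {ω | ε/5 * (p * N) ≤ |W z ω - μ[W z]|} with hbadN_def
  set badD : Set Ω := {ω | ε/5 * (p * D) ≤ |W z' ω - μ[W z']|} with hbadD_def
  have hmbadN : MeasurableSet badN :=
    measurableSet_le measurable_const (((hmeasW z).sub measurable_const).abs)
  have hmbadD : MeasurableSet badD :=
    measurableSet_le measurable_const (((hmeasW z').sub measurable_const).abs)
  -- the good event is contained in the target event
  have hsub : (badN ∪ badD)ᶜ ⊆
      {ω | (1 - ε) * ratSimOn x y z z' (Finset.univ : Finset U) A B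
              ≤ ratSimOn x y z z' (Sk ω) (A ∩ Sk ω) (B ∩ Sk ω)
            ∧ ratSimOn x y z z' (Sk ω) (A ∩ Sk ω) (B ∩ Sk ω)
              ≤ (1 + ε) * ratSimOn x y z z' (Finset.univ : Finset U) A B} := by
    intro ω hω
    simp only [Set.mem_compl_iff, Set.mem_union, hbadN_def, hbadD_def,
      Set.mem_setOf_eq, not_or, not_le] at hω
    obtain ⟨hωN, hωD⟩ := hω
    rw [hEWz] at hωN
    rw [hEWz'] at hωD
    have hNup : W z ω ≤ (1 + ε/5) * (p * N) := by
      have h := (abs_lt.mp hωN).2; nlinarith only [h]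
    have hNlo : (1 - ε/5) * (p * N) ≤ W z ω := by
      have h := (abs_lt.mp hωN).1; nlinarith only [h]
    have hDup : W z' ω ≤ (1 + ε/5) * (p * D) := by
      have h := (abs_lt.mp hωD).2; nlinarith only [h]
    have hDlo : (1 - ε/5) * (p * D) ≤ W z' ω := by
      have h := (abs_lt.mp hωD).1; nlinarith only [h]
    have hdpos : 0 < W z' ω := lt_of_lt_of_le
      (mul_pos (by linarith only [hε1] : (0:ℝ) < 1 - ε/5) (mul_pos hp0 hDpos)) hDlo
    -- identify the sampled similarity with the ratio of weighted sums
    have hXi : ∀ i, (i ∈ Sk ω → X i ω = 1) ∧ (i ∉ Sk ω → X i ω = 0) := by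
      intro i
      constructor
      · exact (hSk ω i).mp
      · intro hi
        rcases h01 i ω with h | h
        · exact h
        · exact absurd ((hSk ω i).mpr h) hi
    have hcard : ∀ T : Finset U, ((T ∩ Sk ω).card : ℝ) = ∑ i ∈ T, X i ω :=
      fun T => ratSim_card_sum T (Sk ω) (fun i => X i ω) hXi
    have e1 : (A ∩ Sk ω) ∩ (B ∩ Sk ω) = (A ∩ B) ∩ Sk ω := by
      ext i; simp only [Finset.mem_inter]; tauto
    have e2 : Sk ω \ ((A ∩ Sk ω) ∪ (B ∩ Sk ω)) = ((A ∪ B)ᶜ) ∩ Sk ω := by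
      ext i; simp; tauto
    have e3 : symmDiff (A ∩ Sk ω) (B ∩ Sk ω) = (symmDiff A B) ∩ Sk ω := by
      ext i; simp [Finset.mem_symmDiff]; tauto
    have hWrep : ∀ w' : ℝ,
        x * (((A ∩ Sk ω) ∩ (B ∩ Sk ω)).card : ℝ)
          + y * ((Sk ω \ ((A ∩ Sk ω) ∪ (B ∩ Sk ω))).card : ℝ)
          + w' * ((symmDiff (A ∩ Sk ω) (B ∩ Sk ω)).card : ℝ) = W w' ω := by
      intro w'
      rw [e1, e2, e3, hcard, hcard, hcard]
      simp only [hW_def, hcf_def]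
      rw [ratSim_sum_split A B x w' y (fun i => X i ω)]
      ring
    have hrat : ratSimOn x y z z' (Sk ω) (A ∩ Sk ω) (B ∩ Sk ω) = W z ω / W z' ω := by
      rw [ratSimOn, hWrep z', hWrep z, if_neg hdpos.ne']
    rw [Set.mem_setOf_eq, hrat, hSval]
    have hcoef1 : (1 - ε) * (1 + ε/5) ≤ 1 - ε/5 := by nlinarith only [hε, sq_nonneg ε]
    have hcoef2 : 1 + ε/5 ≤ (1 + ε) * (1 - ε/5) := by
      nlinarith only [mul_nonneg hε.le (by linarith only [hε1] : (0:ℝ) ≤ 1 - ε)]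
    constructor
    · rw [mul_div_assoc' (1-ε) N D, div_le_div_iff₀ hDpos hdpos]
      have g1 : (1 - ε) * N * W z' ω ≤ (1 - ε) * N * ((1 + ε/5) * (p * D)) :=
        mul_le_mul_of_nonneg_left hDup (mul_nonneg (by linarith only [hε1]) hNpos.le)
      have g2 : (1 - ε/5) * (p * N) * D ≤ W z ω * D :=
        mul_le_mul_of_nonneg_right hNlo hDpos.le
      have g3 : (1 - ε) * N * ((1 + ε/5) * (p * D)) ≤ (1 - ε/5) * (p * N) * D := by
        nlinarith only [mul_le_mul_of_nonneg_right hcoef1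
          (le_of_lt (mul_pos hp0 (mul_pos hNpos hDpos)))]
      exact g1.trans (g3.trans g2)
    · rw [mul_div_assoc' (1+ε) N D, div_le_div_iff₀ hdpos hDpos]
      have g1 : W z ω * D ≤ (1 + ε/5) * (p * N) * D :=
        mul_le_mul_of_nonneg_right hNup hDpos.le
      have g2 : (1 + ε) * N * ((1 - ε/5) * (p * D)) ≤ (1 + ε) * N * W z' ω :=
        mul_le_mul_of_nonneg_left hDlo (mul_nonneg (by linarith only [hε]) hNpos.le)
      have g3 : (1 + ε/5) * (p * N) * D ≤ (1 + ε) * N * ((1 - ε/5) * (p * D)) := by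
        nlinarith only [mul_le_mul_of_nonneg_right hcoef2
          (le_of_lt (mul_pos hp0 (mul_pos hNpos hDpos)))]
      exact g1.trans (g3.trans g2)
  -- final measure computation
  refine le_trans ?_ (measure_mono hsub)
  have hunion : μ (badN ∪ badD) ≤ ENNReal.ofReal (2 * δ) := by
    refine le_trans (measure_union_le _ _) ?_
    refine le_trans (add_le_add chebN chebD) ?_
    rw [← ENNReal.ofReal_add hδ.le hδ.le]
    exact ENNReal.ofReal_le_ofReal (le_of_eq (by ring))
  rw [Set.compl_union] at *
  rw [← Set.compl_union]
  rw [measure_compl (hmbadN.union hmbadD) (measure_ne_top μ _), measure_univ]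
  calc ENNReal.ofReal (1 - 2 * δ) = 1 - ENNReal.ofReal (2 * δ) := by
        rw [ENNReal.ofReal_sub _ (by positivity), ENNReal.ofReal_one]
    _ ≤ 1 - μ (badN ∪ badD) := tsub_le_tsub_left hunion 1
end

section
/- Let 0 < ε, δ, r < 1, let x, y ≥ 0 and 0 ≤ z ≤ z' with z' ≥ max(x, y, z), and let A, B be subsets of a finite universe U with S_{x,y,z,z'}(A,B) > 0. Fix k ∈ ℕ and let (X_i)_{i∈U} be independent Bernoulli random variables with Pr[X_i = 1] = 2^{-k}, S_k = {i : X_i = 1}, A_k = A ∩ S_k, B_k = B ∩ S_k. If 2^k ≤ (ε/5)²·δ·r·N(A,B) / max{x+y, z'+y, z+y}, then Pr[ S_{x,y,z,z'}(A_k, B_k) ≥ S_{x,y,z,z'}(A,B) / (δ·(1 − (ε/5)·√r)) ] ≤ 2δ, where S_{x,y,z,z'}(A_k, B_k) is the rational set similarity of A_k and B_k computed with respect to the universe S_k. -/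
open MeasureTheory ProbabilityTheory

lemma partition_sum {α : Type*} [Fintype α] [DecidableEq α] (A B : Finset α) (F : α → ℝ) :
    ∑ i, F i = ∑ i ∈ A ∩ B, F i + ∑ i ∈ symmDiff A B, F i + ∑ i ∈ (A ∪ B)ᶜ, F i := by
  have h1 : (A ∩ B) ∪ (symmDiff A B ∪ (A ∪ B)ᶜ) = Finset.univ := by
    ext i
    simp only [Finset.mem_union, Finset.mem_inter, Finset.mem_compl, Finset.mem_symmDiff,
      Finset.mem_univ, iff_true]
    tauto
  have d1 : Disjoint (A ∩ B) (symmDiff A B ∪ (A ∪ B)ᶜ) := by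
    rw [Finset.disjoint_left]
    intro i hi hi2
    simp only [Finset.mem_inter] at hi
    simp only [Finset.mem_union, Finset.mem_compl, Finset.mem_symmDiff] at hi2
    tauto
  have d2 : Disjoint (symmDiff A B) ((A ∪ B)ᶜ) := by
    rw [Finset.disjoint_left]
    intro i hi hi2
    simp only [Finset.mem_symmDiff] at hi
    simp only [Finset.mem_compl, Finset.mem_union] at hi2
    tauto
  rw [← h1, Finset.sum_union d1, Finset.sum_union d2, add_assoc]

lemma coeff_sum {α : Type*} [Fintype α] [DecidableEq α] (A B : Finset α) (a b c : ℝ)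
    (w : α → ℝ) :
    ∑ i, (if i ∈ A ∩ B then a else if i ∈ symmDiff A B then b else c) * w i
      = a * ∑ i ∈ A ∩ B, w i + b * ∑ i ∈ symmDiff A B, w i + c * ∑ i ∈ (A ∪ B)ᶜ, w i := by
  rw [partition_sum A B, Finset.mul_sum, Finset.mul_sum, Finset.mul_sum]
  congr 1
  congr 1
  · refine Finset.sum_congr rfl fun i hi => ?_
    rw [if_pos hi]
  · refine Finset.sum_congr rfl fun i hi => ?_
    have h1 : i ∉ A ∩ B := by
      simp only [Finset.mem_symmDiff] at hi
      simp only [Finset.mem_inter]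
      tauto
    rw [if_neg h1, if_pos hi]
  · refine Finset.sum_congr rfl fun i hi => ?_
    simp only [Finset.mem_compl, Finset.mem_union] at hi
    have h1 : i ∉ A ∩ B := by simp only [Finset.mem_inter]; tauto
    have h2 : i ∉ symmDiff A B := by simp only [Finset.mem_symmDiff]; tauto
    rw [if_neg h1, if_neg h2]

set_option maxHeartbeats 2000000 in
/-- under subsampling with independent Bernoulli(`2^{-k}`) variables,
if `S_{x,y,z,z'}(A,B) > 0` and `2^k ≤ (ε/5)²·δ·r·N(A,B) / max{x+y, z'+y, z+y}`, then
the probability that the sampled similarity exceeds `S(A,B) / (δ·(1 - (ε/5)·√r))`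
is at most `2δ`. -/
theorem sampled_ratSim_overshoot
    (ε δ r : ℝ) (hε : 0 < ε) (hε1 : ε < 1) (hδ : 0 < δ) (hδ1 : δ < 1)
    (hr : 0 < r) (hr1 : r < 1)
    (x y z z' : ℝ) (hx : 0 ≤ x) (hy : 0 ≤ y) (hz : 0 ≤ z) (hzz' : z ≤ z')
    (hmax : max (max x y) z ≤ z')
    {U : Type*} [Fintype U] [DecidableEq U] (A B : Finset U)
    (hsim : 0 < ratSimOn x y z z' (Finset.univ : Finset U) A B)
    (k : ℕ)
    {Ω : Type*} [MeasurableSpace Ω] (μ : Measure Ω) [IsProbabilityMeasure μ]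
    (X : U → Ω → ℝ) (hmeas : ∀ i, Measurable (X i))
    (hindep : iIndepFun X μ)
    (h01 : ∀ i ω, X i ω = 0 ∨ X i ω = 1)
    (hq : ∀ i, μ {ω | X i ω = 1} = ENNReal.ofReal ((1 / 2 : ℝ) ^ k))
    (Sk : Ω → Finset U) (hSk : ∀ ω i, i ∈ Sk ω ↔ X i ω = 1)
    (hk : (2 : ℝ) ^ k ≤ (ε / 5) ^ 2 * δ * r
        * (x * ((A ∩ B).card : ℝ) + y * (((A ∪ B)ᶜ : Finset U).card : ℝ)
            + z * ((symmDiff A B).card : ℝ))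
        / max (max (x + y) (z' + y)) (z + y)) :
    μ {ω | ratSimOn x y z z' (Finset.univ : Finset U) A B
            / (δ * (1 - ε / 5 * Real.sqrt r))
          ≤ ratSimOn x y z z' (Sk ω) (A ∩ Sk ω) (B ∩ Sk ω)}
      ≤ ENNReal.ofReal (2 * δ) := by
  classical
  set p : ℝ := (1 / 2 : ℝ) ^ k with hpdef
  have hp0 : 0 < p := by positivity
  have hp1 : p ≤ 1 := pow_le_one₀ (by norm_num) (by norm_num)
  have hp2 : (2 : ℝ) ^ k * p = 1 := by
    rw [hpdef, ← mul_pow]; norm_num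
  have hz'0 : 0 ≤ z' := le_trans hz hzz'
  have hxz' : x ≤ z' := le_trans (le_trans (le_max_left x y) (le_max_left _ z)) hmax
  have hyz' : y ≤ z' := le_trans (le_trans (le_max_right x y) (le_max_left _ z)) hmax
  set N : ℝ := x * ((A ∩ B).card : ℝ) + y * (((A ∪ B)ᶜ : Finset U).card : ℝ)
      + z * ((symmDiff A B).card : ℝ) with hNdef
  set D : ℝ := x * ((A ∩ B).card : ℝ) + y * (((A ∪ B)ᶜ : Finset U).card : ℝ)
      + z' * ((symmDiff A B).card : ℝ) with hDdef
  set M : ℝ := max (max (x + y) (z' + y)) (z + y) with hMdef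
  have hcard1 : (0:ℝ) ≤ ((A ∩ B).card : ℝ) := Nat.cast_nonneg _
  have hcard2 : (0:ℝ) ≤ (((A ∪ B)ᶜ : Finset U).card : ℝ) := Nat.cast_nonneg _
  have hcard3 : (0:ℝ) ≤ ((symmDiff A B).card : ℝ) := Nat.cast_nonneg _
  have hND : N ≤ D := by
    have h := mul_le_mul_of_nonneg_right hzz' hcard3
    rw [hNdef, hDdef]; linarith
  have hMz' : z' + y ≤ M := le_trans (le_max_right _ _) (le_max_left _ _)
  have hM0 : 0 ≤ M := le_trans (by positivity) hMz'
  have h2k : (0:ℝ) < 2 ^ k := by positivity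
  have hN0 : 0 < N := by
    by_contra h
    push_neg at h
    have hc0 : 0 < (ε / 5) ^ 2 * δ * r := by positivity
    have hnum : (ε / 5) ^ 2 * δ * r * N ≤ 0 := mul_nonpos_iff.2 (Or.inl ⟨hc0.le, h⟩)
    have : (ε / 5) ^ 2 * δ * r * N / M ≤ 0 := div_nonpos_iff.2 (Or.inr ⟨hnum, hM0⟩)
    linarith
  have hD0 : 0 < D := lt_of_lt_of_le hN0 hND
  have hM0' : 0 < M := by
    rcases lt_or_eq_of_le hM0 with h | h
    · exact h
    · exfalso; rw [← h, div_zero] at hk; linarith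
  have hkey : M ≤ (ε / 5) ^ 2 * δ * r * N * p := by
    have h1 : (2:ℝ) ^ k * M ≤ (ε / 5) ^ 2 * δ * r * N :=
      (le_div_iff₀ hM0').mp hk
    calc M = ((2:ℝ) ^ k * M) * p := by rw [mul_comm ((2:ℝ)^k) M, mul_assoc, hp2, mul_one]
    _ ≤ ((ε / 5) ^ 2 * δ * r * N) * p := by
        apply mul_le_mul_of_nonneg_right h1 hp0.le
  set t : ℝ := ε / 5 * Real.sqrt r with htdef
  have hsr0 : 0 < Real.sqrt r := Real.sqrt_pos.2 hr
  have hsr1 : Real.sqrt r < 1 := by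
    have := Real.sqrt_lt_sqrt hr.le hr1
    rwa [Real.sqrt_one] at this
  have ht0 : 0 < t := by positivity
  have ht1 : t < 1 := by
    rw [htdef]
    have h1 : ε / 5 * Real.sqrt r ≤ ε / 5 * 1 :=
      mul_le_mul_of_nonneg_left hsr1.le (by positivity)
    linarith
  have ht2 : t ^ 2 = (ε / 5) ^ 2 * r := by
    rw [htdef, mul_pow, Real.sq_sqrt hr.le]
  -- the coefficient functions
  set cN : U → ℝ := fun i => if i ∈ A ∩ B then x else if i ∈ symmDiff A B then z else y
    with hcNdef
  set cD : U → ℝ := fun i => if i ∈ A ∩ B then x else if i ∈ symmDiff A B then z' else y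
    with hcDdef
  have hcNnn : ∀ i, 0 ≤ cN i := by
    intro i; rw [hcNdef]; dsimp only; split_ifs <;> assumption
  have hcDnn : ∀ i, 0 ≤ cD i := by
    intro i; rw [hcDdef]; dsimp only; split_ifs <;> assumption
  have hcDle : ∀ i, cD i ≤ z' + y := by
    intro i; rw [hcDdef]; dsimp only; split_ifs <;> linarith
  set f : Ω → ℝ := fun ω => ∑ i : U, cN i * X i ω with hfdef
  set g : Ω → ℝ := fun ω => ∑ i : U, cD i * X i ω with hgdef
  have hfapp : ∀ ω, f ω = ∑ i : U, cN i * X i ω := fun ω => rfl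
  have hgapp : ∀ ω, g ω = ∑ i : U, cD i * X i ω := fun ω => rfl
  have hfpi : f = ∑ i : U, (fun ω => cN i * X i ω) := by
    funext ω; rw [hfdef]; rw [Finset.sum_apply]
  have hgpi : g = ∑ i : U, (fun ω => cD i * X i ω) := by
    funext ω; rw [hgdef]; rw [Finset.sum_apply]
  -- sum of coefficients
  have hsumN : ∑ i : U, cN i = N := by
    have h := coeff_sum A B x z y (fun _ => (1:ℝ))
    simp only [mul_one, Finset.sum_const, nsmul_eq_mul] at h
    rw [hcNdef, hNdef]
    rw [show (∑ i : U, (fun i => if i ∈ A ∩ B then x else if i ∈ symmDiff A B then z else y) i)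
        = ∑ i : U, (if i ∈ A ∩ B then x else if i ∈ symmDiff A B then z else y) from rfl]
    linarith [h]
  have hsumD : ∑ i : U, cD i = D := by
    have h := coeff_sum A B x z' y (fun _ => (1:ℝ))
    simp only [mul_one, Finset.sum_const, nsmul_eq_mul] at h
    rw [hcDdef, hDdef]
    rw [show (∑ i : U, (fun i => if i ∈ A ∩ B then x else if i ∈ symmDiff A B then z' else y) i)
        = ∑ i : U, (if i ∈ A ∩ B then x else if i ∈ symmDiff A B then z' else y) from rfl]
    linarith [h]
  -- basic facts about X i
  have hXmem : ∀ i, MemLp (X i) 2 μ := by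
    intro i
    refine MemLp.of_bound (hmeas i).aestronglyMeasurable 1 (ae_of_all _ fun ω => ?_)
    rcases h01 i ω with h | h <;> simp [h]
  have hsmeas : ∀ i, MeasurableSet {ω | X i ω = 1} := by
    intro i
    exact hmeas i (measurableSet_singleton 1)
  have hEX : ∀ i, ∫ ω, X i ω ∂μ = p := by
    intro i
    have hind : X i = Set.indicator {ω | X i ω = 1} (1 : Ω → ℝ) := by
      funext ω
      rcases h01 i ω with h | h
      · rw [Set.indicator_of_notMem]
        · exact h
        · simp only [Set.mem_setOf_eq, h]; norm_num
      · rw [Set.indicator_of_mem]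
        · exact h.trans rfl
        · exact h
    calc ∫ ω, X i ω ∂μ = ∫ ω, Set.indicator {ω | X i ω = 1} (1 : Ω → ℝ) ω ∂μ := by rw [← hind]
    _ = (μ {ω | X i ω = 1}).toReal := integral_indicator_one (hsmeas i)
    _ = p := by rw [hq i, ENNReal.toReal_ofReal hp0.le]
  have hvarX : ∀ i, variance (X i) μ = p - p ^ 2 := by
    intro i
    rw [variance_eq_sub (hXmem i)]
    have hsq : (X i) ^ 2 = X i := by
      funext ω
      rcases h01 i ω with h | h <;> simp [h]
    rw [hsq]
    rw [show μ[X i] = ∫ ω, X i ω ∂μ from rfl, hEX i]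
  -- integrability
  have hYint : ∀ i, Integrable (fun ω => cN i * X i ω) μ :=
    fun i => ((hXmem i).integrable one_le_two).const_mul _
  have hZint : ∀ i, Integrable (fun ω => cD i * X i ω) μ :=
    fun i => ((hXmem i).integrable one_le_two).const_mul _
  have hfint : Integrable f μ := by
    rw [hfdef]; exact integrable_finset_sum _ fun i _ => hYint i
  have hgint : Integrable g μ := by
    rw [hgdef]; exact integrable_finset_sum _ fun i _ => hZint i
  have hgmem : MemLp g 2 μ := by
    rw [hgpi]; exact memLp_finset_sum' _ fun i _ => ((hXmem i).const_mul _)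
  -- expectations
  have hEf : ∫ ω, f ω ∂μ = p * N := by
    rw [hfdef]
    rw [integral_finset_sum _ fun i _ => hYint i]
    have : ∀ i : U, ∫ ω, cN i * X i ω ∂μ = cN i * p := by
      intro i; rw [integral_const_mul, hEX i]
    simp_rw [this]
    rw [← Finset.sum_mul, hsumN, mul_comm]
  have hEg : ∫ ω, g ω ∂μ = p * D := by
    rw [hgdef]
    rw [integral_finset_sum _ fun i _ => hZint i]
    have : ∀ i : U, ∫ ω, cD i * X i ω ∂μ = cD i * p := by
      intro i; rw [integral_const_mul, hEX i]
    simp_rw [this]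
    rw [← Finset.sum_mul, hsumD, mul_comm]
  -- variance of g
  have hvarg : variance g μ ≤ p * (z' + y) * D := by
    have hpair : Set.Pairwise ↑(Finset.univ : Finset U)
        fun i j => IndepFun (fun ω => cD i * X i ω) (fun ω => cD j * X j ω) μ := by
      intro i _ j _ hij
      exact (hindep.indepFun hij).comp (measurable_id.const_mul (cD i))
        (measurable_id.const_mul (cD j))
    have hsum := IndepFun.variance_sum (μ := μ)
      (X := fun i => fun ω => cD i * X i ω) (s := Finset.univ)
      (fun i _ => (hXmem i).const_mul _) hpair
    rw [hgpi, hsum]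
    have hb : ∀ i ∈ (Finset.univ : Finset U),
        variance (fun ω => cD i * X i ω) μ ≤ (z' + y) * cD i * p := by
      intro i _
      rw [variance_const_mul, hvarX i]
      have h1 := hcDnn i
      have h2 := hcDle i
      have e1 : cD i ^ 2 * (p - p ^ 2) ≤ cD i ^ 2 * p := by
        apply mul_le_mul_of_nonneg_left _ (sq_nonneg _)
        linarith [sq_nonneg p]
      have e2 : cD i ^ 2 * p ≤ ((z' + y) * cD i) * p := by
        apply mul_le_mul_of_nonneg_right _ hp0.le
        calc cD i ^ 2 = cD i * cD i := by ring
        _ ≤ (z' + y) * cD i := mul_le_mul_of_nonneg_right h2 h1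
      calc cD i ^ 2 * (p - p ^ 2) ≤ cD i ^ 2 * p := e1
      _ ≤ ((z' + y) * cD i) * p := e2
      _ = (z' + y) * cD i * p := by ring
    calc ∑ i : U, variance (fun ω => cD i * X i ω) μ ≤ ∑ i : U, (z' + y) * cD i * p :=
        Finset.sum_le_sum hb
    _ = p * (z' + y) * D := by
        simp_rw [mul_assoc, ← Finset.mul_sum]
        rw [← Finset.sum_mul, hsumD]
        ring
  -- the two bad events
  set E1 : Set Ω := {ω | t * (p * D) ≤ |g ω - p * D|} with hE1def
  set E2 : Set Ω := {ω | p * N / δ ≤ f ω} with hE2def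
  have hμE1 : μ E1 ≤ ENNReal.ofReal δ := by
    have hc : 0 < t * (p * D) := by positivity
    have hche := meas_ge_le_variance_div_sq (μ := μ) hgmem hc
    have hEg' : μ[g] = p * D := hEg
    rw [hEg'] at hche
    refine le_trans hche (ENNReal.ofReal_le_ofReal ?_)
    rw [div_le_iff₀ (by positivity)]
    have h1 : z' + y ≤ t ^ 2 * δ * p * N := by
      rw [ht2]
      calc z' + y ≤ M := hMz'
      _ ≤ (ε / 5) ^ 2 * δ * r * N * p := hkey
      _ = (ε / 5) ^ 2 * r * δ * p * N := by ring
    calc variance g μ ≤ p * (z' + y) * D := hvarg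
    _ ≤ p * (t ^ 2 * δ * p * N) * D :=
        mul_le_mul_of_nonneg_right (mul_le_mul_of_nonneg_left h1 hp0.le) hD0.le
    _ ≤ p * (t ^ 2 * δ * p * D) * D :=
        mul_le_mul_of_nonneg_right (mul_le_mul_of_nonneg_left
          (mul_le_mul_of_nonneg_left hND (by positivity)) hp0.le) hD0.le
    _ = δ * (t * (p * D)) ^ 2 := by ring
  have hμE2 : μ E2 ≤ ENNReal.ofReal δ := by
    have hfnn : 0 ≤ᵐ[μ] f := by
      refine ae_of_all _ fun ω => ?_
      rw [hfapp]
      refine Finset.sum_nonneg fun i _ => mul_nonneg (hcNnn i) ?_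
      rcases h01 i ω with h | h <;> rw [h] <;> norm_num
    have hmark := mul_meas_ge_le_integral_of_nonneg hfnn hfint (p * N / δ)
    rw [hEf] at hmark
    have hpos : 0 < p * N / δ := by positivity
    have htR : (μ E2).toReal ≤ δ := by
      have h2 : p * N / δ * δ = p * N := by field_simp
      refine (mul_le_mul_iff_right₀ hpos).mp ?_
      rw [h2]
      exact hmark
    calc μ E2 = ENNReal.ofReal ((μ E2).toReal) := (ENNReal.ofReal_toReal (measure_ne_top μ _)).symm
    _ ≤ ENNReal.ofReal δ := ENNReal.ofReal_le_ofReal htR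
  -- the value of the similarity on the full universe
  have hSval : ratSimOn x y z z' (Finset.univ : Finset U) A B = N / D := by
    rw [ratSimOn]
    simp only [← Finset.compl_eq_univ_sdiff]
    rw [if_neg hD0.ne']
  -- the value of the sampled similarity
  have hsamp : ∀ ω, ratSimOn x y z z' (Sk ω) (A ∩ Sk ω) (B ∩ Sk ω)
      = if g ω = 0 then 1 else f ω / g ω := by
    intro ω
    have hX01 : ∀ i, X i ω = if i ∈ Sk ω then (1:ℝ) else 0 := by
      intro i
      by_cases h : i ∈ Sk ω
      · rw [if_pos h]; exact (hSk ω i).mp h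
      · rw [if_neg h]
        rcases h01 i ω with h0 | h1
        · exact h0
        · exact absurd ((hSk ω i).mpr h1) h
    have hcard : ∀ T : Finset U, ((T ∩ Sk ω).card : ℝ) = ∑ i ∈ T, X i ω := by
      intro T
      simp_rw [hX01]
      rw [Finset.sum_ite_mem, Finset.sum_const, nsmul_eq_mul, mul_one]
    have e1 : (A ∩ Sk ω) ∩ (B ∩ Sk ω) = (A ∩ B) ∩ Sk ω := by
      ext i; simp only [Finset.mem_inter]; tauto
    have e2 : Sk ω \ ((A ∩ Sk ω) ∪ (B ∩ Sk ω)) = (A ∪ B)ᶜ ∩ Sk ω := by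
      ext i
      simp only [Finset.mem_sdiff, Finset.mem_union, Finset.mem_inter, Finset.mem_compl]
      tauto
    have e3 : symmDiff (A ∩ Sk ω) (B ∩ Sk ω) = symmDiff A B ∩ Sk ω := by
      ext i
      simp only [Finset.mem_symmDiff, Finset.mem_inter]
      tauto
    have hf' : x * ((A ∩ B ∩ Sk ω).card : ℝ) + y * (((A ∪ B)ᶜ ∩ Sk ω).card : ℝ)
        + z * ((symmDiff A B ∩ Sk ω).card : ℝ) = f ω := by
      rw [hcard, hcard, hcard, hfapp, hcNdef]
      rw [coeff_sum A B x z y (fun i => X i ω)]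
      ring
    have hg' : x * ((A ∩ B ∩ Sk ω).card : ℝ) + y * (((A ∪ B)ᶜ ∩ Sk ω).card : ℝ)
        + z' * ((symmDiff A B ∩ Sk ω).card : ℝ) = g ω := by
      rw [hcard, hcard, hcard, hgapp, hcDdef]
      rw [coeff_sum A B x z' y (fun i => X i ω)]
      ring
    rw [ratSimOn, e1, e2, e3, hf', hg']
  -- event inclusion
  have hsub : {ω | ratSimOn x y z z' (Finset.univ : Finset U) A B
            / (δ * (1 - ε / 5 * Real.sqrt r))
          ≤ ratSimOn x y z z' (Sk ω) (A ∩ Sk ω) (B ∩ Sk ω)} ⊆ E1 ∪ E2 := by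
    intro ω hω
    simp only [Set.mem_setOf_eq] at hω
    by_contra hcon
    simp only [hE1def, hE2def, Set.mem_union, Set.mem_setOf_eq, not_or, not_le] at hcon
    obtain ⟨h1, h2⟩ := hcon
    have h1' := abs_lt.mp h1
    have h1t : 0 < 1 - t := by linarith
    have hglb : (1 - t) * (p * D) < g ω := by
      have he : (1 - t) * (p * D) = p * D - t * (p * D) := by ring
      linarith [h1'.1]
    have hgpos : 0 < g ω := lt_trans (by positivity) hglb
    rw [hsamp ω, if_neg hgpos.ne', hSval, ← htdef] at hω
    have hfnn : 0 ≤ f ω := by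
      rw [hfapp]
      refine Finset.sum_nonneg fun i _ => mul_nonneg (hcNnn i) ?_
      rcases h01 i ω with h | h <;> rw [h] <;> norm_num
    have hstep1 : f ω / g ω ≤ f ω / ((1 - t) * (p * D)) := by
      apply div_le_div_of_nonneg_left hfnn (by positivity) -- order?
      exact hglb.le
    have hstep2 : f ω / ((1 - t) * (p * D)) < (p * N / δ) / ((1 - t) * (p * D)) :=
      (div_lt_div_iff_of_pos_right (by positivity)).mpr h2
    have hstep3 : (p * N / δ) / ((1 - t) * (p * D)) = N / D / (δ * (1 - t)) := by
      field_simp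
    have : f ω / g ω < N / D / (δ * (1 - t)) := by
      rw [← hstep3]; exact lt_of_le_of_lt hstep1 hstep2
    linarith
  calc μ {ω | ratSimOn x y z z' (Finset.univ : Finset U) A B
            / (δ * (1 - ε / 5 * Real.sqrt r))
          ≤ ratSimOn x y z z' (Sk ω) (A ∩ Sk ω) (B ∩ Sk ω)} ≤ μ (E1 ∪ E2) :=
      measure_mono hsub
  _ ≤ μ E1 + μ E2 := measure_union_le _ _
  _ ≤ ENNReal.ofReal δ + ENNReal.ofReal δ := add_le_add hμE1 hμE2
  _ = ENNReal.ofReal (2 * δ) := by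
      rw [← ENNReal.ofReal_add hδ.le hδ.le]; ring_nf
end

section
/- Let 0 < ε, δ, r < 1 and let A, B be nonempty subsets of a finite universe U with Jaccard similarity J(A,B) = |A∩B|/|A∪B| ≥ r. Fix k ∈ ℕ and let (X_i)_{i∈U} be independent Bernoulli random variables with Pr[X_i = 1] = 2^{-k}, S_k = {i : X_i = 1}, A_k = A ∩ S_k, B_k = B ∩ S_k. If 2^k ≤ (ε/5)²·δ·r·|A|, then with probability at least 1 − 2δ, (1−ε)·J(A,B) ≤ J(A_k, B_k) ≤ (1+ε)·J(A,B), where J(A_k,B_k) = |A_k∩B_k|/|A_k∪B_k| (taken to be 1 if A_k∪B_k = ∅). -/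
open MeasureTheory ProbabilityTheory Finset
open scoped ENNReal

section Aux
variable {Ω : Type*} [MeasurableSpace Ω] {μ : Measure Ω} [IsProbabilityMeasure μ]

lemma bern_memLp {X : Ω → ℝ} (hm : Measurable X) (h01 : ∀ ω, X ω = 0 ∨ X ω = 1) :
    MemLp X 2 μ :=
  (memLp_top_of_bound hm.aestronglyMeasurable 1 (Filter.Eventually.of_forall fun ω => by
    rcases h01 ω with h | h <;> simp [h])).mono_exponent le_top

lemma bern_integral {X : Ω → ℝ} (hm : Measurable X) (h01 : ∀ ω, X ω = 0 ∨ X ω = 1)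
    {p : ℝ} (hp : 0 ≤ p) (hq : μ {ω | X ω = 1} = ENNReal.ofReal p) :
    ∫ ω, X ω ∂μ = p := by
  have hXind : X = Set.indicator {ω | X ω = 1} (fun _ => (1:ℝ)) := by
    funext ω
    rcases h01 ω with h | h
    · have hnm : ω ∉ {ω | X ω = 1} := by simp [Set.mem_setOf_eq, h]
      simp [Set.indicator_of_notMem hnm, h]
    · have hmem : ω ∈ {ω | X ω = 1} := h
      simp [Set.indicator_of_mem hmem, h]
  have hms : MeasurableSet {ω | X ω = 1} := hm (measurableSet_singleton 1)
  rw [hXind, integral_indicator_const (1:ℝ) hms, measureReal_def, hq, ENNReal.toReal_ofReal hp, smul_eq_mul,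
    mul_one]

lemma bern_variance {X : Ω → ℝ} (hm : Measurable X) (h01 : ∀ ω, X ω = 0 ∨ X ω = 1)
    {p : ℝ} (hp : 0 ≤ p) (hq : μ {ω | X ω = 1} = ENNReal.ofReal p) :
    variance X μ ≤ p := by
  rw [variance_eq_sub (bern_memLp hm h01)]
  have hXsq : (X ^ 2 : Ω → ℝ) = X := funext fun ω => by
    rcases h01 ω with h | h <;> simp [h]
  have hi : μ[X] = p := bern_integral hm h01 hp hq
  rw [hXsq, hi]
  nlinarith [sq_nonneg p]

lemma bern_cheb {ι : Type*} {X : ι → Ω → ℝ} (hm : ∀ i, Measurable (X i))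
    (h01 : ∀ i ω, X i ω = 0 ∨ X i ω = 1) {p : ℝ} (hp : 0 ≤ p)
    (hq : ∀ i, μ {ω | X i ω = 1} = ENNReal.ofReal p)
    (hpair : ∀ i j, i ≠ j → IndepFun (X i) (X j) μ)
    (T : Finset ι) {c : ℝ} (hc : 0 < c) :
    μ {ω | c ≤ |∑ i ∈ T, X i ω - p * T.card|} ≤ ENNReal.ofReal (p * T.card / c ^ 2) := by
  have hL2 : ∀ i ∈ T, MemLp (X i) 2 μ := fun i _ => bern_memLp (hm i) (h01 i)
  have hsum2 : MemLp (∑ i ∈ T, X i) 2 μ := memLp_finsetSum' T hL2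
  have hmean : μ[∑ i ∈ T, X i] = p * T.card := by
    calc μ[∑ i ∈ T, X i] = ∫ ω, ∑ i ∈ T, X i ω ∂μ := by simp [Finset.sum_apply]
      _ = ∑ i ∈ T, ∫ ω, X i ω ∂μ :=
          integral_finset_sum T (fun i _ =>
            ((bern_memLp (hm i) (h01 i)).integrable (by norm_num)))
      _ = ∑ _i ∈ T, p := Finset.sum_congr rfl fun i _ => bern_integral (hm i) (h01 i) hp (hq i)
      _ = p * T.card := by rw [Finset.sum_const, nsmul_eq_mul, mul_comm]
  have hvar : variance (∑ i ∈ T, X i) μ ≤ p * T.card := by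
    rw [IndepFun.variance_sum hL2 (fun i _ j _ hij => hpair i j hij)]
    calc ∑ i ∈ T, variance (X i) μ ≤ ∑ _i ∈ T, p :=
          Finset.sum_le_sum fun i _ => bern_variance (hm i) (h01 i) hp (hq i)
      _ = p * T.card := by rw [Finset.sum_const, nsmul_eq_mul, mul_comm]
  have hmain := meas_ge_le_variance_div_sq (μ := μ) hsum2 hc
  rw [hmean] at hmain
  simp only [Finset.sum_apply] at hmain
  refine hmain.trans (ENNReal.ofReal_le_ofReal ?_)
  gcongr

end Aux

/-- The Jaccard similarity `|A∩B| / |A∪B|` of two finite sets, with the convention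
that it equals `1` when `A ∪ B = ∅`. -/
noncomputable def jaccard {α : Type*} [DecidableEq α] (A B : Finset α) : ℝ :=
  if A ∪ B = ∅ then 1 else ((A ∩ B).card : ℝ) / ((A ∪ B).card : ℝ)

set_option maxHeartbeats 1000000 in
/-- subsampling preserves the Jaccard similarity up to a `(1±ε)` factor
with probability at least `1 - 2δ`, provided `J(A,B) ≥ r` and
`2^k ≤ (ε/5)²·δ·r·|A|`. Here `S_k = {i : X_i = 1}` for independent Bernoulli(`2^{-k}`)
variables `X_i`, `A_k = A ∩ S_k`, `B_k = B ∩ S_k`. -/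
theorem sampled_jaccard_approx
    (ε δ r : ℝ) (hε : 0 < ε) (hε1 : ε < 1) (hδ : 0 < δ) (hδ1 : δ < 1)
    (hr : 0 < r) (hr1 : r < 1)
    {U : Type*} [Fintype U] [DecidableEq U] (A B : Finset U)
    (hA : A.Nonempty) (hB : B.Nonempty)
    (hsim : r ≤ jaccard A B)
    (k : ℕ)
    {Ω : Type*} [MeasurableSpace Ω] (μ : Measure Ω) [IsProbabilityMeasure μ]
    (X : U → Ω → ℝ) (hmeas : ∀ i, Measurable (X i))
    (hindep : iIndepFun X μ)
    (h01 : ∀ i ω, X i ω = 0 ∨ X i ω = 1)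
    (hq : ∀ i, μ {ω | X i ω = 1} = ENNReal.ofReal ((1 / 2 : ℝ) ^ k))
    (Sk : Ω → Finset U) (hSk : ∀ ω i, i ∈ Sk ω ↔ X i ω = 1)
    (hk : (2 : ℝ) ^ k ≤ (ε / 5) ^ 2 * δ * r * (A.card : ℝ)) :
    ENNReal.ofReal (1 - 2 * δ)
      ≤ μ {ω | (1 - ε) * jaccard A B ≤ jaccard (A ∩ Sk ω) (B ∩ Sk ω)
            ∧ jaccard (A ∩ Sk ω) (B ∩ Sk ω) ≤ (1 + ε) * jaccard A B} := by
  classical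
  rcases le_or_gt (1 - 2 * δ) 0 with hd | hd
  · rw [ENNReal.ofReal_eq_zero.2 hd]; exact zero_le
  set p : ℝ := (1 / 2 : ℝ) ^ k with hpdef
  have hp : 0 < p := by positivity
  obtain ⟨a, haA⟩ := hA
  have hUne : (A ∪ B).Nonempty := ⟨a, Finset.mem_union_left _ haA⟩
  set n₁ : ℝ := ((A ∩ B).card : ℝ) with hn₁def
  set n₂ : ℝ := ((A ∪ B).card : ℝ) with hn₂def
  have hn₂ : 0 < n₂ := by rw [hn₂def]; exact_mod_cast Finset.card_pos.2 hUne
  have hJ : jaccard A B = n₁ / n₂ := by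
    simp only [jaccard, if_neg hUne.ne_empty]
    rfl
  have hrn : r * n₂ ≤ n₁ := by
    rw [hJ] at hsim; exact (le_div_iff₀ hn₂).mp hsim
  have hn₁ : 0 < n₁ := lt_of_lt_of_le (mul_pos hr hn₂) hrn
  have hcardA : (A.card : ℝ) ≤ n₂ := by
    rw [hn₂def]
    exact_mod_cast Finset.card_le_card (Finset.subset_union_left (s₂ := B))
  set θ : ℝ := ε / 5 with hθdef
  have hθ : 0 < θ := by positivity
  have hθ1 : θ < 1 := by rw [hθdef]; linarith
  -- key quantitative consequence of hk
  have hp2k : p * (2:ℝ) ^ k = 1 := by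
    rw [hpdef, ← mul_pow]; norm_num
  have hpA : 1 ≤ θ ^ 2 * δ * r * (p * A.card) := by
    have h2k : (0:ℝ) < (2:ℝ) ^ k := by positivity
    nlinarith [mul_le_mul_of_nonneg_left hk hp.le]
  have hA2 : 1 ≤ θ ^ 2 * δ * r * (p * n₂) := by
    nlinarith [hpA, mul_le_mul_of_nonneg_left hcardA (by positivity : (0:ℝ) ≤ θ ^ 2 * δ * r * p)]
  have hpn₁ : 1 ≤ θ ^ 2 * δ * (p * n₁) := by
    nlinarith [hA2, mul_le_mul_of_nonneg_left hrn (by positivity : (0:ℝ) ≤ θ ^ 2 * δ * p)]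
  have hpn₂ : 1 ≤ θ ^ 2 * δ * (p * n₂) := by
    nlinarith [hA2, mul_nonneg (mul_nonneg (mul_nonneg (mul_nonneg (sq_nonneg θ) hδ.le) hp.le)
      hn₂.le) (by linarith : (0:ℝ) ≤ 1 - r)]
  -- failure probability bound
  have hfail : ∀ n : ℝ, 0 < n → 1 ≤ θ ^ 2 * δ * (p * n) →
      p * n / (θ * (p * n)) ^ 2 ≤ δ := by
    intro n hn h1
    have hpn : 0 < p * n := by positivity
    rw [div_le_iff₀ (pow_pos (mul_pos hθ hpn) 2)]
    nlinarith [mul_le_mul_of_nonneg_right h1 hpn.le]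
  -- the two good events
  set G₁ : Set Ω := {ω | |∑ i ∈ A ∩ B, X i ω - p * n₁| < θ * (p * n₁)} with hG₁def
  set G₂ : Set Ω := {ω | |∑ i ∈ A ∪ B, X i ω - p * n₂| < θ * (p * n₂)} with hG₂def
  have hpair : ∀ i j : U, i ≠ j → IndepFun (X i) (X j) μ :=
    fun i j hij => hindep.indepFun hij
  have hGc : ∀ (T : Finset U) (c : ℝ), 0 < c →
      μ {ω | |∑ i ∈ T, X i ω - p * T.card| < c}ᶜ ≤ ENNReal.ofReal (p * T.card / c ^ 2) := by
    intro T c hc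
    have : {ω | |∑ i ∈ T, X i ω - p * T.card| < c}ᶜ
        = {ω | c ≤ |∑ i ∈ T, X i ω - p * T.card|} := by
      ext ω
      simp only [Set.mem_compl_iff, Set.mem_setOf_eq, not_lt]
    rw [this]
    exact bern_cheb hmeas h01 hp.le hq hpair T hc
  have hc₁ : (0:ℝ) < θ * (p * n₁) := mul_pos hθ (mul_pos hp hn₁)
  have hc₂ : (0:ℝ) < θ * (p * n₂) := mul_pos hθ (mul_pos hp hn₂)
  have hG₁c : μ G₁ᶜ ≤ ENNReal.ofReal δ := by
    refine (hGc (A ∩ B) _ hc₁).trans (ENNReal.ofReal_le_ofReal ?_)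
    exact hfail n₁ hn₁ hpn₁
  have hG₂c : μ G₂ᶜ ≤ ENNReal.ofReal δ := by
    refine (hGc (A ∪ B) _ hc₂).trans (ENNReal.ofReal_le_ofReal ?_)
    exact hfail n₂ hn₂ hpn₂
  -- union bound
  have hunion : (1 : ℝ≥0∞) ≤ μ (G₁ ∩ G₂) + ENNReal.ofReal (δ + δ) := by
    have hsub : (Set.univ : Set Ω) ⊆ (G₁ ∩ G₂) ∪ (G₁ᶜ ∪ G₂ᶜ) := by
      intro ω _
      by_cases h1 : ω ∈ G₁ <;> by_cases h2 : ω ∈ G₂ <;> simp [h1, h2]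
    calc (1 : ℝ≥0∞) = μ Set.univ := measure_univ.symm
      _ ≤ μ ((G₁ ∩ G₂) ∪ (G₁ᶜ ∪ G₂ᶜ)) := measure_mono hsub
      _ ≤ μ (G₁ ∩ G₂) + μ (G₁ᶜ ∪ G₂ᶜ) := measure_union_le _ _
      _ ≤ μ (G₁ ∩ G₂) + (μ G₁ᶜ + μ G₂ᶜ) := add_le_add le_rfl (measure_union_le _ _)
      _ ≤ μ (G₁ ∩ G₂) + (ENNReal.ofReal δ + ENNReal.ofReal δ) :=
          add_le_add le_rfl (add_le_add hG₁c hG₂c)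
      _ = μ (G₁ ∩ G₂) + ENNReal.ofReal (δ + δ) := by
          rw [ENNReal.ofReal_add hδ.le hδ.le]
  have hlow : ENNReal.ofReal (1 - 2 * δ) ≤ μ (G₁ ∩ G₂) := by
    have h1 : (1 : ℝ≥0∞) = ENNReal.ofReal (1 - 2 * δ) + ENNReal.ofReal (δ + δ) := by
      rw [← ENNReal.ofReal_add (by linarith) (by linarith), ← ENNReal.ofReal_one]
      congr 1; ring
    rw [h1] at hunion
    exact (ENNReal.add_le_add_iff_right ENNReal.ofReal_ne_top).mp hunion
  refine hlow.trans (measure_mono ?_)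
  -- deterministic part
  rintro ω ⟨h₁, h₂⟩
  simp only [hG₁def, Set.mem_setOf_eq] at h₁
  simp only [hG₂def, Set.mem_setOf_eq] at h₂
  have hcard : ∀ T : Finset U, ((T ∩ Sk ω).card : ℝ) = ∑ i ∈ T, X i ω := by
    intro T
    have hTf : T ∩ Sk ω = T.filter (fun i => X i ω = 1) := by
      ext i; simp [Finset.mem_filter, hSk ω i]
    rw [hTf, Finset.natCast_card_filter]
    exact Finset.sum_congr rfl fun i _ => by rcases h01 i ω with h | h <;> simp [h]
  set m₁ : ℝ := (((A ∩ B) ∩ Sk ω).card : ℝ) with hm₁def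
  set m₂ : ℝ := (((A ∪ B) ∩ Sk ω).card : ℝ) with hm₂def
  rw [abs_lt, ← hcard (A ∩ B), ← hm₁def] at h₁
  rw [abs_lt, ← hcard (A ∪ B), ← hm₂def] at h₂
  obtain ⟨h₁l, h₁u⟩ := h₁
  obtain ⟨h₂l, h₂u⟩ := h₂
  have hm₁lo : (1 - θ) * (p * n₁) ≤ m₁ := by nlinarith
  have hm₁hi : m₁ ≤ (1 + θ) * (p * n₁) := by nlinarith
  have hm₂lo : (1 - θ) * (p * n₂) ≤ m₂ := by nlinarith
  have hm₂hi : m₂ ≤ (1 + θ) * (p * n₂) := by nlinarith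
  have hθ1' : (0:ℝ) < 1 - θ := by linarith
  have hθ1'' : (0:ℝ) < 1 + θ := by linarith
  have hm₂pos : (0:ℝ) < m₂ := lt_of_lt_of_le (mul_pos hθ1' (mul_pos hp hn₂)) hm₂lo
  have hm₁nn : (0:ℝ) ≤ m₁ := by rw [hm₁def]; exact Nat.cast_nonneg _
  have e₁ : (A ∩ Sk ω) ∩ (B ∩ Sk ω) = (A ∩ B) ∩ Sk ω := by
    ext i; simp only [Finset.mem_inter]; tauto
  have e₂ : (A ∩ Sk ω) ∪ (B ∩ Sk ω) = (A ∪ B) ∩ Sk ω := by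
    ext i; simp only [Finset.mem_inter, Finset.mem_union]; tauto
  have hne' : (A ∪ B) ∩ Sk ω ≠ ∅ := by
    have h' : (0:ℝ) < (((A ∪ B) ∩ Sk ω).card : ℝ) := by rw [← hm₂def]; exact hm₂pos
    exact (Finset.card_pos.mp (by exact_mod_cast h')).ne_empty
  have hJk : jaccard (A ∩ Sk ω) (B ∩ Sk ω) = m₁ / m₂ := by
    simp only [jaccard, e₁, e₂, hm₁def, hm₂def]
    rw [if_neg hne']
  have lower : (1 - ε) * jaccard A B ≤ jaccard (A ∩ Sk ω) (B ∩ Sk ω) := by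
    rw [hJk, hJ]
    have key : ((1 - θ) * (p * n₁)) / ((1 + θ) * (p * n₂)) = ((1 - θ) / (1 + θ)) * (n₁ / n₂) := by
      rw [div_mul_div_comm, show (1 - θ) * (p * n₁) = p * ((1 - θ) * n₁) by ring,
        show (1 + θ) * (p * n₂) = p * ((1 + θ) * n₂) by ring, mul_div_mul_left _ _ hp.ne']
    calc (1 - ε) * (n₁ / n₂) ≤ ((1 - θ) / (1 + θ)) * (n₁ / n₂) := by
          apply mul_le_mul_of_nonneg_right _ (div_nonneg hn₁.le hn₂.le)
          rw [le_div_iff₀ hθ1'']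
          nlinarith
      _ = ((1 - θ) * (p * n₁)) / ((1 + θ) * (p * n₂)) := key.symm
      _ ≤ m₁ / m₂ := div_le_div₀ hm₁nn hm₁lo hm₂pos hm₂hi
  have upper : jaccard (A ∩ Sk ω) (B ∩ Sk ω) ≤ (1 + ε) * jaccard A B := by
    rw [hJk, hJ]
    have key : ((1 + θ) * (p * n₁)) / ((1 - θ) * (p * n₂)) = ((1 + θ) / (1 - θ)) * (n₁ / n₂) := by
      rw [div_mul_div_comm, show (1 + θ) * (p * n₁) = p * ((1 + θ) * n₁) by ring,
        show (1 - θ) * (p * n₂) = p * ((1 - θ) * n₂) by ring, mul_div_mul_left _ _ hp.ne']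
    calc m₁ / m₂ ≤ ((1 + θ) * (p * n₁)) / ((1 - θ) * (p * n₂)) :=
          div_le_div₀ (mul_nonneg hθ1''.le (mul_pos hp hn₁).le) hm₁hi
            (mul_pos hθ1' (mul_pos hp hn₂)) hm₂lo
      _ = ((1 + θ) / (1 - θ)) * (n₁ / n₂) := key
      _ ≤ (1 + ε) * (n₁ / n₂) := by
          apply mul_le_mul_of_nonneg_right _ (div_nonneg hn₁.le hn₂.le)
          rw [div_le_iff₀ hθ1']
          nlinarith
  exact ⟨lower, upper⟩
end

section
/- Let 0 < ε, δ, r < 1 and let A, B be subsets of a finite universe U with |U| = d whose Hamming similarity H(A,B) = 1 − |A△B|/d satisfies H(A,B) ≥ r. Fix k ∈ ℕ and let (X_i)_{i∈U} be independent Bernoulli random variables with Pr[X_i = 1] = 2^{-k}, S_k = {i : X_i = 1}, A_k = A ∩ S_k, B_k = B ∩ S_k. If 2^k ≤ (ε/5)²·δ·r·d / 2, then with probability at least 1 − 2δ, (1−ε)·H(A,B) ≤ H_k(A_k, B_k) ≤ (1+ε)·H(A,B), where H_k(A_k,B_k) = 1 − |A_k△B_k|/|S_k| (taken to be 1 if S_k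 = ∅). -/
open MeasureTheory ProbabilityTheory

/-- The Hamming similarity of `A, B` with respect to a universe `V`:
`1 - |A△B| / |V|`, with the convention that it equals `1` when `V = ∅`. -/
noncomputable def hammingSimOn {α : Type*} [DecidableEq α] (V A B : Finset α) : ℝ :=
  if V = ∅ then 1 else 1 - ((symmDiff A B).card : ℝ) / (V.card : ℝ)

private lemma aux_tail (ε δ x : ℝ) (hε : 0 < ε) (hδ : 0 < δ)
    (hx : 50/(ε^2*δ) ≤ x) : 25 / (ε^2 * x) ≤ δ/2 := by
  have hx0 : 0 < x := lt_of_lt_of_le (by positivity) hx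
  rw [div_le_iff₀ (by positivity)]
  rw [div_le_iff₀ (by positivity)] at hx
  nlinarith

private lemma aux_var (ε p t : ℝ) (hε : 0 < ε) (hp : 0 < p) (ht : 0 < t) :
    t * (p - p^2) / (ε/5 * (p*t))^2 ≤ 25 / (ε^2 * (p*t)) := by
  rw [div_le_div_iff₀ (by positivity) (by positivity)]
  have h : t * (p - p^2) * (ε^2 * (p*t)) = ε^2*p^2*t^2 - ε^2*p^3*t^2 := by ring
  have h2 : 25 * (ε/5 * (p*t))^2 = ε^2*p^2*t^2 := by ring
  rw [h, h2]
  nlinarith [mul_nonneg (mul_nonneg (sq_nonneg ε) (pow_nonneg hp.le 3)) (sq_nonneg t)]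

private lemma aux_ratio (ε p c d nc n : ℝ) (hε : 0 < ε) (hε1 : ε < 1)
    (hp : 0 < p) (hc : 0 < c) (hd : 0 < d)
    (hnc : |nc - p*c| < ε/5 * (p*c)) (hn : |n - p*d| < ε/5 * (p*d)) :
    0 < n ∧ (1-ε) * (c/d) ≤ nc/n ∧ nc/n ≤ (1+ε) * (c/d) := by
  rw [abs_lt] at hnc hn
  have hn0 : 0 < n := by nlinarith
  have hpcd : 0 < p*c*d := by positivity
  have hepcd : 0 ≤ ε*(p*c*d) := by positivity
  have heepcd : 0 ≤ ε*ε*(p*c*d) := by positivity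
  refine ⟨hn0, ?_, ?_⟩
  · rw [show (1-ε)*(c/d) = ((1-ε)*c)/d by ring, div_le_div_iff₀ hd hn0]
    have h1 : (1-ε)*c*n ≤ (1-ε)*c*(p*d + ε/5*(p*d)) :=
      mul_le_mul_of_nonneg_left (by linarith [hn.2]) (by nlinarith)
    have h2 : (p*c - ε/5*(p*c))*d ≤ nc*d :=
      mul_le_mul_of_nonneg_right (by linarith [hnc.1]) hd.le
    nlinarith
  · rw [show (1+ε)*(c/d) = ((1+ε)*c)/d by ring, div_le_div_iff₀ hn0 hd]
    have h1 : nc*d ≤ (p*c + ε/5*(p*c))*d :=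
      mul_le_mul_of_nonneg_right (by linarith [hnc.2]) hd.le
    have h2 : (1+ε)*c*(p*d - ε/5*(p*d)) ≤ (1+ε)*c*n :=
      mul_le_mul_of_nonneg_left (by linarith [hn.1]) (by nlinarith)
    nlinarith

set_option maxHeartbeats 1000000 in
/-- subsampling preserves the Hamming similarity
`H(A,B) = 1 - |A△B|/d` up to a `(1±ε)` factor with probability at least `1 - 2δ`,
provided `H(A,B) ≥ r` and `2^k ≤ (ε/5)²·δ·r·d / 2`. Here `S_k = {i : X_i = 1}` for
independent Bernoulli(`2^{-k}`) variables `X_i`, `A_k = A ∩ S_k`, `B_k = B ∩ S_k`, and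
the sampled Hamming similarity is computed with respect to the universe `S_k`. -/
theorem sampled_hamming_approx
    (ε δ r : ℝ) (hε : 0 < ε) (hε1 : ε < 1) (hδ : 0 < δ) (hδ1 : δ < 1)
    (hr : 0 < r) (hr1 : r < 1)
    {U : Type*} [Fintype U] [DecidableEq U] (d : ℕ) (hd : Fintype.card U = d)
    (A B : Finset U)
    (hsim : r ≤ hammingSimOn (Finset.univ : Finset U) A B)
    (k : ℕ)
    {Ω : Type*} [MeasurableSpace Ω] (μ : Measure Ω) [IsProbabilityMeasure μ]
    (X : U → Ω → ℝ) (hmeas : ∀ i, Measurable (X i))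
    (hindep : iIndepFun X μ)
    (h01 : ∀ i ω, X i ω = 0 ∨ X i ω = 1)
    (hq : ∀ i, μ {ω | X i ω = 1} = ENNReal.ofReal ((1 / 2 : ℝ) ^ k))
    (Sk : Ω → Finset U) (hSk : ∀ ω i, i ∈ Sk ω ↔ X i ω = 1)
    (hk : (2 : ℝ) ^ k ≤ (ε / 5) ^ 2 * δ * r * (d : ℝ) / 2) :
    ENNReal.ofReal (1 - 2 * δ)
      ≤ μ {ω | (1 - ε) * hammingSimOn (Finset.univ : Finset U) A B
              ≤ hammingSimOn (Sk ω) (A ∩ Sk ω) (B ∩ Sk ω)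
            ∧ hammingSimOn (Sk ω) (A ∩ Sk ω) (B ∩ Sk ω)
              ≤ (1 + ε) * hammingSimOn (Finset.univ : Finset U) A B} := by
  classical
  set p : ℝ := (1/2 : ℝ) ^ k with hp_def
  have hp0 : 0 < p := by positivity
  have h2k1 : (1:ℝ) ≤ 2 ^ k := one_le_pow₀ (by norm_num)
  have h2kpos : (0:ℝ) < 2 ^ k := by positivity
  have hd0 : (0:ℝ) < d := by
    by_contra h
    push_neg at h
    have hA : (0:ℝ) < (ε/5)^2 * δ * r := by positivity
    nlinarith
  have hpinv : p = ((2:ℝ)^k)⁻¹ := by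
    rw [hp_def, one_div, inv_pow]
  -- key size bound : p * d ≥ 50 / (ε^2 * δ * r)
  have hQpos : (0:ℝ) < ε^2 * δ * r := by positivity
  have hkey : 50 * (2:ℝ)^k ≤ ε^2 * δ * r * d := by nlinarith
  have hpd : 50 / (ε^2 * δ * r) ≤ p * d := by
    rw [div_le_iff₀ hQpos, hpinv]
    rw [inv_mul_eq_div, div_mul_eq_mul_div, le_div_iff₀ h2kpos]
    linarith
  -- the symmetric difference and its complement
  set D : Finset U := symmDiff A B with hD_def
  set C : Finset U := Dᶜ with hC_def
  have hdnat : 0 < d := by exact_mod_cast hd0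
  have hunivne : (Finset.univ : Finset U) ≠ ∅ :=
    (Finset.card_pos.mp (by rw [Finset.card_univ, hd]; exact hdnat)).ne_empty
  have hsim' : hammingSimOn (Finset.univ : Finset U) A B
      = 1 - (D.card : ℝ) / d := by
    rw [hammingSimOn, if_neg hunivne, Finset.card_univ, hd]
  have hDle : D.card ≤ d := by
    rw [← hd, ← Finset.card_univ]; exact Finset.card_le_card (Finset.subset_univ _)
  have hcC : (C.card : ℝ) = (d : ℝ) - D.card := by
    rw [hC_def, Finset.card_compl, hd, Nat.cast_sub hDle]
  -- c ≥ r d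
  have hsimval : r ≤ 1 - (D.card:ℝ)/d := by rw [← hsim']; exact hsim
  have hDled : (D.card:ℝ)/d ≤ 1 - r := by linarith
  have hcrd : r * d ≤ (C.card:ℝ) := by
    rw [hcC]
    rw [div_le_iff₀ hd0] at hDled
    nlinarith
  have hcC0 : (0:ℝ) < C.card := lt_of_lt_of_le (by positivity) hcrd
  -- L² membership
  have hL2 : ∀ i, MemLp (X i) 2 μ := fun i =>
    MemLp.of_bound (hmeas i).aestronglyMeasurable 1
      (Filter.Eventually.of_forall fun ω => by rcases h01 i ω with h|h <;> simp [h])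
  -- expectation of each X i
  have hEX : ∀ i, μ[X i] = p := by
    intro i
    have hXind : X i = Set.indicator {ω | X i ω = 1} 1 := by
      funext ω
      rcases h01 i ω with h|h <;> simp [Set.indicator_apply, h]
    have hms : MeasurableSet {ω | X i ω = 1} := (hmeas i) (measurableSet_singleton 1)
    rw [hXind, integral_indicator_one hms, measureReal_def, hq i, ENNReal.toReal_ofReal hp0.le]
  have hXsq : ∀ i, (X i)^2 = X i := by
    intro i; funext ω
    rcases h01 i ω with h|h <;> simp [h]
  have hVarX : ∀ i, variance (X i) μ = p - p^2 := by
    intro i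
    rw [variance_eq_sub (hL2 i), hXsq i, hEX i]
  -- sums
  have hMemSum : ∀ T : Finset U, MemLp (∑ i ∈ T, X i) 2 μ :=
    fun T => memLp_finset_sum' T fun i _ => hL2 i
  have hESum : ∀ T : Finset U, μ[∑ i ∈ T, X i] = p * T.card := by
    intro T
    have : μ[∑ i ∈ T, X i] = ∫ ω, ∑ i ∈ T, X i ω ∂μ := by
      congr 1; funext ω; simp [Finset.sum_apply]
    rw [this, integral_finset_sum T fun i _ => (hL2 i).integrable one_le_two]
    simp [hEX, mul_comm]
  have hVarSum : ∀ T : Finset U, variance (∑ i ∈ T, X i) μ = T.card * (p - p^2) := by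
    intro T
    rw [IndepFun.variance_sum (fun i _ => hL2 i)
      (fun i _ j _ hij => hindep.indepFun hij)]
    simp [hVarX, Finset.sum_const, nsmul_eq_mul]
    ring
  -- Chebyshev
  have cheb : ∀ T : Finset U, 0 < (T.card:ℝ) →
      μ {ω | ε/5 * (p * T.card) ≤ |(∑ i ∈ T, X i) ω - p * T.card|}
        ≤ ENNReal.ofReal (25 / (ε^2 * (p * T.card))) := by
    intro T hT
    have hc0' : 0 < ε/5 * (p * T.card) := by positivity
    have h := meas_ge_le_variance_div_sq (μ := μ) (hMemSum T) hc0'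
    rw [hESum T] at h
    refine h.trans (ENNReal.ofReal_le_ofReal ?_)
    rw [hVarSum T]
    exact aux_var ε p _ hε hp0 hT
  -- numeric bounds
  have hbound : ∀ {x : ℝ}, 50/(ε^2*δ) ≤ x → 25 / (ε^2 * x) ≤ δ/2 :=
    fun {x} hx => aux_tail ε δ x hε hδ hx
  have hpdd : 50/(ε^2*δ) ≤ p * d := by
    refine le_trans ?_ hpd
    rw [div_le_div_iff₀ (by positivity) (by positivity)]
    nlinarith
  have hpcc : 50/(ε^2*δ) ≤ p * C.card := by
    have h1 : r * (p * d) ≤ p * C.card := by nlinarith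
    have h2 : r * (50/(ε^2*δ*r)) = 50/(ε^2*δ) := by field_simp
    refine le_trans ?_ h1
    rw [← h2]
    exact mul_le_mul_of_nonneg_left hpd hr.le
  -- counting: sums are cardinalities of sampled intersections
  have hcount : ∀ (T : Finset U) (ω : Ω), (∑ i ∈ T, X i) ω = ((T ∩ Sk ω).card : ℝ) := by
    intro T ω
    rw [← Finset.filter_mem_eq_inter, Finset.sum_apply, ← Finset.sum_boole]
    refine Finset.sum_congr rfl fun i _ => ?_
    rcases h01 i ω with h|h <;> simp [h, hSk ω i]
  have hsymmS : ∀ ω : Ω, symmDiff (A ∩ Sk ω) (B ∩ Sk ω) = D ∩ Sk ω := by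
    intro ω
    rw [hD_def, ← Finset.inf_eq_inter]
    exact (inf_symmDiff_distrib_right A B (Sk ω)).symm
  have hsplit : ∀ ω : Ω, ((Sk ω).card : ℝ)
      = ((C ∩ Sk ω).card : ℝ) + ((D ∩ Sk ω).card : ℝ) := by
    intro ω
    have h1 : (C ∩ Sk ω) ∪ (D ∩ Sk ω) = Sk ω := by
      rw [← Finset.union_inter_distrib_right, hC_def]
      have : (Dᶜ ∪ D : Finset U) = Finset.univ := by
        ext i
        simp only [Finset.mem_union, Finset.mem_compl, Finset.mem_univ, iff_true]
        exact (em (i ∈ D)).symm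
      rw [this, Finset.univ_inter]
    have h2 : Disjoint (C ∩ Sk ω) (D ∩ Sk ω) :=
      Disjoint.mono Finset.inter_subset_left Finset.inter_subset_left
        (by rw [hC_def]; exact disjoint_compl_left)
    have h3 := Finset.card_union_of_disjoint h2
    rw [h1] at h3
    rw [h3]
    push_cast
    ring
  -- measurability of the sums
  have hmsum : ∀ T : Finset U, Measurable (∑ i ∈ T, X i) := by
    intro T
    have h : (∑ i ∈ T, X i) = fun ω => ∑ i ∈ T, X i ω := by
      funext ω; simp [Finset.sum_apply]
    rw [h]
    exact Finset.measurable_sum T fun i _ => hmeas i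
  -- the two bad events
  have hucard : (((Finset.univ : Finset U).card : ℕ) : ℝ) = (d : ℝ) := by
    rw [Finset.card_univ, hd]
  have hb1 : μ {ω | ε/5 * (p * C.card) ≤ |(∑ i ∈ C, X i) ω - p * C.card|}
      ≤ ENNReal.ofReal (δ/2) :=
    (cheb C hcC0).trans (ENNReal.ofReal_le_ofReal (hbound hpcc))
  have hb2 : μ {ω | ε/5 * (p * d) ≤ |(∑ i ∈ (Finset.univ : Finset U), X i) ω - p * d|}
      ≤ ENNReal.ofReal (δ/2) := by
    have h := cheb Finset.univ (by rw [hucard]; exact hd0)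
    rw [hucard] at h
    exact h.trans (ENNReal.ofReal_le_ofReal (hbound hpdd))
  have hm1 : MeasurableSet {ω | ε/5 * (p * C.card) ≤ |(∑ i ∈ C, X i) ω - p * C.card|} :=
    measurableSet_le measurable_const (((hmsum C).sub measurable_const).abs)
  have hm2 : MeasurableSet {ω | ε/5 * (p * d)
      ≤ |(∑ i ∈ (Finset.univ : Finset U), X i) ω - p * d|} :=
    measurableSet_le measurable_const (((hmsum Finset.univ).sub measurable_const).abs)
  -- H(A,B) = |C|/d
  have hHval : hammingSimOn (Finset.univ : Finset U) A B = (C.card : ℝ) / d := by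
    rw [hsim', hcC]
    field_simp
  -- inclusion of the good event in the target
  have hsub : ({ω | ε/5 * (p * C.card) ≤ |(∑ i ∈ C, X i) ω - p * C.card|}
        ∪ {ω | ε/5 * (p * d) ≤ |(∑ i ∈ (Finset.univ : Finset U), X i) ω - p * d|})ᶜ
      ⊆ {ω | (1 - ε) * hammingSimOn (Finset.univ : Finset U) A B
              ≤ hammingSimOn (Sk ω) (A ∩ Sk ω) (B ∩ Sk ω)
            ∧ hammingSimOn (Sk ω) (A ∩ Sk ω) (B ∩ Sk ω)
              ≤ (1 + ε) * hammingSimOn (Finset.univ : Finset U) A B} := by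
    intro ω hω
    simp only [Set.mem_compl_iff, Set.mem_union, Set.mem_setOf_eq, not_or, not_le] at hω
    obtain ⟨h1, h2⟩ := hω
    rw [hcount C ω] at h1
    rw [hcount Finset.univ ω, Finset.univ_inter] at h2
    obtain ⟨hn0, hlo, hhi⟩ := aux_ratio ε p (C.card) d ((C ∩ Sk ω).card) ((Sk ω).card)
      hε hε1 hp0 hcC0 hd0 h1 h2
    have hSne : Sk ω ≠ ∅ := by
      intro h
      rw [h] at hn0
      norm_num [Finset.card_empty] at hn0
    have hval : hammingSimOn (Sk ω) (A ∩ Sk ω) (B ∩ Sk ω)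
        = ((C ∩ Sk ω).card : ℝ) / ((Sk ω).card : ℝ) := by
      rw [hammingSimOn, if_neg hSne, hsymmS ω, eq_div_iff hn0.ne', sub_mul, one_mul,
        div_mul_cancel₀ _ hn0.ne']
      linarith [hsplit ω]
    refine ⟨?_, ?_⟩ <;> rw [hval, hHval]
    · exact hlo
    · exact hhi
  -- final measure computation
  have hμbad : μ ({ω | ε/5 * (p * C.card) ≤ |(∑ i ∈ C, X i) ω - p * C.card|}
        ∪ {ω | ε/5 * (p * d) ≤ |(∑ i ∈ (Finset.univ : Finset U), X i) ω - p * d|})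
      ≤ ENNReal.ofReal δ := by
    refine (measure_union_le _ _).trans ((add_le_add hb1 hb2).trans ?_)
    rw [← ENNReal.ofReal_add (by positivity) (by positivity)]
    exact ENNReal.ofReal_le_ofReal (by linarith)
  calc ENNReal.ofReal (1 - 2*δ) ≤ 1 - ENNReal.ofReal δ := by
        rcases le_or_gt (1 - 2*δ) 0 with h|h
        · rw [ENNReal.ofReal_of_nonpos h]
          exact zero_le
        · rw [← ENNReal.ofReal_one, ← ENNReal.ofReal_sub _ hδ.le]
          exact ENNReal.ofReal_le_ofReal (by linarith)
    _ ≤ 1 - μ ({ω | ε/5 * (p * C.card) ≤ |(∑ i ∈ C, X i) ω - p * C.card|}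
        ∪ {ω | ε/5 * (p * d) ≤ |(∑ i ∈ (Finset.univ : Finset U), X i) ω - p * d|}) :=
      tsub_le_tsub_left hμbad _
    _ = μ ({ω | ε/5 * (p * C.card) ≤ |(∑ i ∈ C, X i) ω - p * C.card|}
        ∪ {ω | ε/5 * (p * d) ≤ |(∑ i ∈ (Finset.univ : Finset U), X i) ω - p * d|})ᶜ :=
      (prob_compl_eq_one_sub (hm1.union hm2)).symm
    _ ≤ _ := measure_mono hsub
end
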